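/- arXiv:1608.03546 — 12 statements merged into one kernel-verified Lean document; each statement's English description precedes it below -/
import Mathlib

section
/- Let G be a group, let M be a vast subset of G, and let n be a positive integer. Then there exists a positive integer m such that for every subset P of G with |P| ≥ m there is a subset Q of P with |Q| = n and Q⁻¹Q ⊆ M. -/
open Pointwise

/-- Condition `Φ_m`: for every `m`-element subset `P` of `G` there exist two distinct
elements `a, b ∈ P` such that `{a,b}⁻¹{a,b} ⊆ M`, i.e. `1 ∈ M`, `a⁻¹b ∈ M`, `b⁻¹a ∈ M`. -/
def PhiCond {G : Type*} [Group G] (m : ℕ) (M : Set G) : Prop :=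
  ∀ P : Finset G, P.card = m → ∃ a ∈ P, ∃ b ∈ P, a ≠ b ∧
    (1 : G) ∈ M ∧ a⁻¹ * b ∈ M ∧ b⁻¹ * a ∈ M

/-- `M` is vast if it satisfies `Φ_m` for some positive integer `m`. -/
def IsVast {G : Type*} [Group G] (M : Set G) : Prop := ∃ m : ℕ, 0 < m ∧ PhiCond m M

open Classical in
/-- Finite Ramsey theorem for a symmetric relation. -/
lemma ramsey_aux {α : Type*} [DecidableEq α] :
    ∀ N s t : ℕ, s + t ≤ N → ∃ m : ℕ, 0 < m ∧
      ∀ r : α → α → Prop, (∀ a b, r a b → r b a) →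
      ∀ P : Finset α, m ≤ P.card →
        (∃ Q ⊆ P, Q.card = s ∧ ∀ a ∈ Q, ∀ b ∈ Q, a ≠ b → r a b) ∨
        (∃ Q ⊆ P, Q.card = t ∧ ∀ a ∈ Q, ∀ b ∈ Q, a ≠ b → ¬ r a b) := by
  intro N
  induction N with
  | zero =>
    intro s t hst
    refine ⟨1, one_pos, fun r _ P _ => ?_⟩
    obtain rfl : s = 0 := by omega
    exact Or.inl ⟨∅, Finset.empty_subset _, rfl, by simp⟩
  | succ N ih =>
    intro s t hst
    match s, t with
    | 0, t => exact ⟨1, one_pos, fun r _ P _ =>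
        Or.inl ⟨∅, Finset.empty_subset _, rfl, by simp⟩⟩
    | s, 0 => exact ⟨1, one_pos, fun r _ P _ =>
        Or.inr ⟨∅, Finset.empty_subset _, rfl, by simp⟩⟩
    | s + 1, t + 1 =>
      obtain ⟨m₁, hm₁pos, hm₁⟩ := ih s (t + 1) (by omega)
      obtain ⟨m₂, hm₂pos, hm₂⟩ := ih (s + 1) t (by omega)
      refine ⟨m₁ + m₂ + 1, by omega, fun r hsym P hP => ?_⟩
      obtain ⟨x, hx⟩ : ∃ x, x ∈ P := Finset.card_pos.mp (by omega)
      set P' := P.erase x with hP'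
      have hcardP' : m₁ + m₂ ≤ P'.card := by
        have h1 : P'.card = P.card - 1 := Finset.card_erase_of_mem hx
        omega
      set A := P'.filter (fun y => r x y) with hA
      set B := P'.filter (fun y => ¬ r x y) with hB
      have hAB : A.card + B.card = P'.card := Finset.card_filter_add_card_filter_not _
      have hApos : m₁ ≤ A.card ∨ m₂ ≤ B.card := by omega
      rcases hApos with hAc | hBc
      · rcases hm₁ r hsym A hAc with ⟨Q, hQA, hQc, hQcl⟩ | ⟨Q, hQA, hQc, hQind⟩
        · refine Or.inl ⟨insert x Q, ?_, ?_, ?_⟩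
          · intro y hy
            rcases Finset.mem_insert.mp hy with rfl | hy
            · exact hx
            · exact Finset.mem_of_mem_erase (Finset.mem_of_mem_filter _ (hQA hy))
          · have hxQ : x ∉ Q := fun h =>
              Finset.notMem_erase x P (Finset.mem_of_mem_filter _ (hQA h))
            rw [Finset.card_insert_of_notMem hxQ, hQc]
          · intro a ha b hb hab
            rcases Finset.mem_insert.mp ha with ha' | ha'
            · rcases Finset.mem_insert.mp hb with hb' | hb'
              · exact absurd (ha'.trans hb'.symm) hab
              · subst ha'; exact (Finset.mem_filter.mp (hQA hb')).2
            · rcases Finset.mem_insert.mp hb with hb' | hb'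
              · subst hb'; exact hsym _ _ (Finset.mem_filter.mp (hQA ha')).2
              · exact hQcl a ha' b hb' hab
        · exact Or.inr ⟨Q, hQA.trans ((Finset.filter_subset _ _).trans
            (Finset.erase_subset _ _)), hQc, hQind⟩
      · rcases hm₂ r hsym B hBc with ⟨Q, hQB, hQc, hQcl⟩ | ⟨Q, hQB, hQc, hQind⟩
        · exact Or.inl ⟨Q, hQB.trans ((Finset.filter_subset _ _).trans
            (Finset.erase_subset _ _)), hQc, hQcl⟩
        · refine Or.inr ⟨insert x Q, ?_, ?_, ?_⟩
          · intro y hy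
            rcases Finset.mem_insert.mp hy with rfl | hy
            · exact hx
            · exact Finset.mem_of_mem_erase (Finset.mem_of_mem_filter _ (hQB hy))
          · have hxQ : x ∉ Q := fun h =>
              Finset.notMem_erase x P (Finset.mem_of_mem_filter _ (hQB h))
            rw [Finset.card_insert_of_notMem hxQ, hQc]
          · intro a ha b hb hab
            rcases Finset.mem_insert.mp ha with ha' | ha'
            · rcases Finset.mem_insert.mp hb with hb' | hb'
              · exact absurd (ha'.trans hb'.symm) hab
              · subst ha'; exact (Finset.mem_filter.mp (hQB hb')).2
            · rcases Finset.mem_insert.mp hb with hb' | hb'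
              · subst hb'
                exact fun hr => (Finset.mem_filter.mp (hQB ha')).2 (hsym _ _ hr)
              · exact hQind a ha' b hb' hab
  
theorem stmt_0 {G : Type*} [Group G] [Infinite G] (M : Set G) (hM : IsVast M)
    (n : ℕ) (hn : 0 < n) :
    ∃ m : ℕ, 0 < m ∧ ∀ P : Set G, (m : ℕ∞) ≤ P.encard →
      ∃ Q : Set G, Q ⊆ P ∧ Q.encard = (n : ℕ∞) ∧ Q⁻¹ * Q ⊆ M := by
  classical
  obtain ⟨k, hkpos, hk⟩ := hM
  -- 1 ∈ M
  obtain ⟨S, hScard⟩ := Infinite.exists_subset_card_eq G k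
  have h1M : (1 : G) ∈ M := by
    obtain ⟨-, -, -, -, -, h1, -⟩ := hk S hScard
    exact h1
  -- Ramsey
  obtain ⟨m, hmpos, hram⟩ := ramsey_aux (α := G) (n + k) n k le_rfl
  refine ⟨m, hmpos, fun P hP => ?_⟩
  obtain ⟨T, hTP, hTcard⟩ := Set.exists_subset_encard_eq hP
  have hTfin : T.Finite := Set.finite_of_encard_eq_coe hTcard
  have hTc : hTfin.toFinset.card = m := by
    have := hTfin.encard_eq_coe_toFinset_card
    rw [this] at hTcard; exact_mod_cast hTcard
  set r : G → G → Prop := fun a b => a⁻¹ * b ∈ M ∧ b⁻¹ * a ∈ M with hr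
  have hsym : ∀ a b, r a b → r b a := fun a b h => ⟨h.2, h.1⟩
  rcases hram r hsym hTfin.toFinset (by omega) with ⟨Q, hQT, hQc, hQcl⟩ | ⟨Q, hQT, hQc, hQind⟩
  · refine ⟨(Q : Set G), ?_, ?_, ?_⟩
    · intro y hy
      exact hTP (hTfin.mem_toFinset.mp (hQT (by exact_mod_cast hy)))
    · rw [Set.encard_coe_eq_coe_finsetCard, hQc]
    · rintro z hz
      rw [Set.mem_mul] at hz
      obtain ⟨a, ha, b, hb, rfl⟩ := hz
      rw [Set.mem_inv] at ha
      have ha' : a⁻¹ ∈ Q := by simpa using ha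
      have hb' : b ∈ Q := by exact_mod_cast hb
      by_cases hab : a⁻¹ = b
      · subst hab; simpa using h1M
      · have := (hQcl _ ha' _ hb' hab).1
        simpa using this
  · exfalso
    obtain ⟨a, ha, b, hb, hab, -, h1, h2⟩ := hk Q hQc
    exact hQind a ha b hb hab ⟨h1, h2⟩
end

section
/- Let G be a group with identity e, let M be a vast subset of G, and let S ⊆ G. Then there exist finite sets Q, R ⊆ S with |Q| < J_M and |R| < J_M such that S ⊆ QM and S ⊆ MR. Moreover, M is syndetic and I_M < J_M. -/
open Pointwise

/-- `J_M`: the least positive `m` such that `M` satisfies `Φ_m`. -/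
noncomputable def JVast {G : Type*} [Group G] (M : Set G) : ℕ :=
  sInf {m : ℕ | 0 < m ∧ PhiCond m M}

/-- `S` is syndetic if `T * S = G` for some finite `T ⊆ G`. -/
def IsSyndetic {G : Type*} [Group G] (S : Set G) : Prop :=
  ∃ T : Finset G, (T : Set G) * S = Set.univ

/-- `I_S`: the least cardinality of a finite set `T` with `T * S = G`. -/
noncomputable def ISynd {G : Type*} [Group G] (S : Set G) : ℕ :=
  sInf {n : ℕ | ∃ T : Finset G, T.card = n ∧ (T : Set G) * S = Set.univ}

/-- Generic extraction lemma: if every `J`-element set contains a distinct pair related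
by the symmetric relation `r`, then any set `S` contains a finite "independent" subset `Q`
of size `< J` such that every element of `S` is in `Q` or related to a member of `Q`. -/
lemma key_lemma {G : Type*} [Group G] (J : ℕ) (hJ : 0 < J) (r : G → G → Prop)
    (hsymm : ∀ a b, r a b → r b a)
    (hphi : ∀ P : Finset G, P.card = J → ∃ a ∈ P, ∃ b ∈ P, a ≠ b ∧ r a b)
    (S : Set G) :
    ∃ Q : Finset G, (Q : Set G) ⊆ S ∧ Q.card < J ∧
      ∀ s ∈ S, s ∈ Q ∨ ∃ a ∈ Q, r a s := by
  classical
  set A : Set ℕ := {n | ∃ Q : Finset G, (Q : Set G) ⊆ S ∧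
    (∀ a ∈ Q, ∀ b ∈ Q, a ≠ b → ¬ r a b) ∧ Q.card = n} with hA
  have h0 : 0 ∈ A := ⟨∅, by simp⟩
  have hub : ∀ n ∈ A, n < J := by
    rintro n ⟨Q, hQS, hind, rfl⟩
    by_contra h
    push_neg at h
    obtain ⟨P, hPQ, hPcard⟩ := Finset.exists_subset_card_eq h
    obtain ⟨a, ha, b, hb, hab, hr⟩ := hphi P hPcard
    exact hind a (hPQ ha) b (hPQ hb) hab hr
  have hbdd : BddAbove A := ⟨J, fun n hn => (hub n hn).le⟩
  have hN : sSup A ∈ A := Nat.sSup_mem ⟨0, h0⟩ hbdd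
  obtain ⟨Q, hQS, hind, hcard⟩ := hN
  refine ⟨Q, hQS, hub _ ⟨Q, hQS, hind, rfl⟩, ?_⟩
  intro s hs
  by_contra hcon
  push_neg at hcon
  obtain ⟨hsQ, hno⟩ := hcon
  have hmem : Q.card + 1 ∈ A := by
    refine ⟨insert s Q, ?_, ?_, by rw [Finset.card_insert_of_notMem hsQ]⟩
    · intro x hx
      rcases Finset.mem_insert.mp (by exact_mod_cast hx) with h | h
      · subst h; exact hs
      · exact hQS h
    · intro a ha b hb hab hr
      rcases Finset.mem_insert.mp ha with ha' | ha'
      · rcases Finset.mem_insert.mp hb with hb' | hb'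
        · exact hab (ha'.trans hb'.symm)
        · exact hno b hb' (hsymm _ _ (ha' ▸ hr))
      · rcases Finset.mem_insert.mp hb with hb' | hb'
        · exact hno a ha' (hb' ▸ hr)
        · exact hind a ha' b hb' hab hr
  have := le_csSup hbdd hmem
  omega

theorem stmt_2 {G : Type*} [Group G] [Infinite G] (M : Set G) (hM : IsVast M)
    (S : Set G) :
    (∃ Q R : Finset G, (Q : Set G) ⊆ S ∧ (R : Set G) ⊆ S ∧
      Q.card < JVast M ∧ R.card < JVast M ∧
      S ⊆ (Q : Set G) * M ∧ S ⊆ M * (R : Set G)) ∧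
    IsSyndetic M ∧ ISynd M < JVast M := by
  classical
  have hJmem : JVast M ∈ {m : ℕ | 0 < m ∧ PhiCond m M} := Nat.sInf_mem hM
  obtain ⟨hJpos, hphi⟩ := hJmem
  set J := JVast M with hJdef
  -- 1 ∈ M
  have h1M : (1 : G) ∈ M := by
    obtain ⟨P, hP⟩ := Finset.exists_card_eq (α := G) J
    obtain ⟨a, _, b, _, _, h1, _⟩ := hphi P hP
    exact h1
  -- main covering lemma, applied to arbitrary sets
  have left : ∀ T : Set G, ∃ Q : Finset G, (Q : Set G) ⊆ T ∧ Q.card < J ∧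
      T ⊆ (Q : Set G) * M := by
    intro T
    obtain ⟨Q, hQT, hcard, hcov⟩ := key_lemma J hJpos
      (fun a b => a⁻¹ * b ∈ M ∧ b⁻¹ * a ∈ M)
      (fun a b h => ⟨h.2, h.1⟩)
      (fun P hP => by
        obtain ⟨a, ha, b, hb, hab, _, h1, h2⟩ := hphi P hP
        exact ⟨a, ha, b, hb, hab, h1, h2⟩) T
    refine ⟨Q, hQT, hcard, ?_⟩
    intro s hs
    rcases hcov s hs with h | ⟨a, ha, h1, _⟩
    · exact ⟨s, by exact_mod_cast h, 1, h1M, mul_one s⟩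
    · exact ⟨a, by exact_mod_cast ha, a⁻¹ * s, h1, by group⟩
  have right : ∃ R : Finset G, (R : Set G) ⊆ S ∧ R.card < J ∧
      S ⊆ M * (R : Set G) := by
    obtain ⟨R, hRS, hcard, hcov⟩ := key_lemma J hJpos
      (fun a b => a * b⁻¹ ∈ M ∧ b * a⁻¹ ∈ M)
      (fun a b h => ⟨h.2, h.1⟩)
      (fun P hP => by
        have hP' : (P.image (fun x => x⁻¹)).card = J := by
          rw [Finset.card_image_of_injective _ inv_injective, hP]
        obtain ⟨a', ha', b', hb', hab', _, h1, h2⟩ := hphi _ hP'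
        obtain ⟨a, ha, rfl⟩ := Finset.mem_image.mp ha'
        obtain ⟨b, hb, rfl⟩ := Finset.mem_image.mp hb'
        refine ⟨a, ha, b, hb, fun h => hab' (by rw [h]), ?_, ?_⟩
        · simpa using h1
        · simpa using h2) S
    refine ⟨R, hRS, hcard, ?_⟩
    intro s hs
    rcases hcov s hs with h | ⟨a, ha, _, h2⟩
    · exact ⟨1, h1M, s, by exact_mod_cast h, one_mul s⟩
    · exact ⟨s * a⁻¹, h2, a, by exact_mod_cast ha, by group⟩
  obtain ⟨Q, hQS, hQcard, hQcov⟩ := left S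
  obtain ⟨R, hRS, hRcard, hRcov⟩ := right
  refine ⟨⟨Q, R, hQS, hRS, hQcard, hRcard, hQcov, hRcov⟩, ?_⟩
  obtain ⟨T, _, hTcard, hTcov⟩ := left Set.univ
  have hTeq : (T : Set G) * M = Set.univ :=
    Set.eq_univ_of_univ_subset hTcov
  refine ⟨⟨T, hTeq⟩, ?_⟩
  calc ISynd M ≤ T.card := Nat.sInf_le ⟨T, rfl, hTeq⟩
    _ < J := hTcard
end

section
/- If a subset S of a group G is syndetic, then S⁻¹S is vast in G and J_{S⁻¹S} ≤ I_S + 1. -/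
open Pointwise

theorem stmt_3 {G : Type*} [Group G] [Infinite G] (S : Set G) (hS : IsSyndetic S) :
    IsVast (S⁻¹ * S) ∧ JVast (S⁻¹ * S) ≤ ISynd S + 1 := by
  obtain ⟨T₀, hT₀⟩ := hS
  have hne : {n : ℕ | ∃ T : Finset G, T.card = n ∧ (T : Set G) * S = Set.univ}.Nonempty :=
    ⟨T₀.card, T₀, rfl, hT₀⟩
  obtain ⟨T, hTcard, hT⟩ := Nat.sInf_mem hne
  -- S is nonempty
  have hSne : S.Nonempty := by
    by_contra h
    rw [Set.not_nonempty_iff_eq_empty] at h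
    rw [h, Set.mul_empty] at hT
    exact (Set.empty_ne_univ hT).elim
  obtain ⟨s₀, hs₀⟩ := hSne
  have hone : (1 : G) ∈ S⁻¹ * S := ⟨s₀⁻¹, Set.inv_mem_inv.mpr hs₀, s₀, hs₀, inv_mul_cancel s₀⟩
  have hphi : PhiCond (ISynd S + 1) (S⁻¹ * S) := by
    intro P hP
    -- each p ∈ G lies in t * S for some t ∈ T
    have hmem : ∀ p : G, ∃ t ∈ T, ∃ s ∈ S, t * s = p := by
      intro p
      have : p ∈ (T : Set G) * S := by rw [hT]; trivial
      simpa [Set.mem_mul] using this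
    choose f hfT g hgS hfg using hmem
    have hmaps : ∀ p ∈ P, f p ∈ T := fun p _ => hfT p
    have hcard : T.card < P.card := by rw [hP, hTcard]; exact Nat.lt_succ_self _
    obtain ⟨a, ha, b, hb, hab, hfab⟩ :=
      Finset.exists_ne_map_eq_of_card_lt_of_maps_to hcard hmaps
    refine ⟨a, ha, b, hb, hab, hone, ?_, ?_⟩
    · have : a⁻¹ * b = (g a)⁻¹ * g b := by
        calc a⁻¹ * b = (f a * g a)⁻¹ * (f b * g b) := by rw [hfg a, hfg b]
        _ = (g a)⁻¹ * g b := by rw [hfab]; group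
      rw [this]
      exact ⟨(g a)⁻¹, Set.inv_mem_inv.mpr (hgS a), g b, hgS b, rfl⟩
    · have : b⁻¹ * a = (g b)⁻¹ * g a := by
        calc b⁻¹ * a = (f b * g b)⁻¹ * (f a * g a) := by rw [hfg a, hfg b]
        _ = (g b)⁻¹ * g a := by rw [hfab]; group
      rw [this]
      exact ⟨(g b)⁻¹, Set.inv_mem_inv.mpr (hgS b), g a, hgS a, rfl⟩
  refine ⟨⟨ISynd S + 1, Nat.succ_pos _, hphi⟩, Nat.sInf_le ⟨Nat.succ_pos _, hphi⟩⟩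
end

section
/- Let G be a totally bounded topological group. Then every neighborhood U of the identity element of G is a vast subset of G. -/
open Pointwise

theorem stmt_5 {G : Type*} [Group G] [Infinite G] [TopologicalSpace G]
    [IsTopologicalGroup G]
    (htb : ∀ V ∈ nhds (1 : G), ∃ T : Finset G, (T : Set G) * V = Set.univ)
    (U : Set G) (hU : U ∈ nhds (1 : G)) :
    IsVast U := by
  classical
  obtain ⟨V, hV, hVU⟩ := exists_nhds_split_inv hU
  have h1V : (1 : G) ∈ V := mem_of_mem_nhds hV
  have h1U : (1 : G) ∈ U := by simpa using hVU 1 h1V 1 h1V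
  obtain ⟨T, hT⟩ := htb V⁻¹ (inv_mem_nhds_one G hV)
  -- choice function: for each g, pick t ∈ T with g ∈ t * V⁻¹, i.e. t⁻¹ * g ∈ V⁻¹
  have hcov : ∀ g : G, ∃ t ∈ T, (t⁻¹ * g)⁻¹ ∈ V := by
    intro g
    have : g ∈ (T : Set G) * V⁻¹ := by rw [hT]; trivial
    obtain ⟨t, ht, x, hx, hxg⟩ := this
    exact ⟨t, ht, by simp [← hxg, Set.mem_inv.mp hx]⟩
  choose f hfT hfV using hcov
  refine ⟨T.card + 1, Nat.succ_pos _, ?_⟩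
  intro P hP
  have hlt : T.card < P.card := by omega
  obtain ⟨a, ha, b, hb, hab, hfab⟩ :=
    Finset.exists_ne_map_eq_of_card_lt_of_maps_to hlt (fun g hg => hfT g)
  have hb' : ((f a)⁻¹ * b)⁻¹ ∈ V := by rw [hfab]; exact hfV b
  refine ⟨a, ha, b, hb, hab, h1U, ?_, ?_⟩
  · have := hVU ((f a)⁻¹ * a)⁻¹ (hfV a) ((f a)⁻¹ * b)⁻¹ hb'
    simpa [div_eq_mul_inv, mul_assoc] using this
  · have := hVU ((f a)⁻¹ * b)⁻¹ hb' ((f a)⁻¹ * a)⁻¹ (hfV a)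
    simpa [div_eq_mul_inv, mul_assoc] using this
end

section
/- Let G be a group and let W ⊆ G satisfy W ∩ W⁻¹W = ∅. Then G \ W is a vast subset of G and J_{G \ W} ≤ 4. -/
open Pointwise

/-- Any tournament on 4 vertices contains a transitive triangle. -/
lemma tour_aux {G : Type*} (R : G → G → Prop)
    (htr : ∀ x y z : G, R x y → R y z → R x z → False)
    (a b c d : G) (hab : R a b)
    (hac : R a c ∨ R c a) (had : R a d ∨ R d a)
    (hbc : R b c ∨ R c b) (hbd : R b d ∨ R d b)
    (hcd : R c d ∨ R d c) : False := by
  have hca : R c a := by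
    rcases hac with h | h
    · rcases hbc with h' | h'
      · exact (htr a b c hab h' h).elim
      · exact (htr a c b h h' hab).elim
    · exact h
  have hda : R d a := by
    rcases had with h | h
    · rcases hbd with h' | h'
      · exact (htr a b d hab h' h).elim
      · exact (htr a d b h h' hab).elim
    · exact h
  have hbc' : R b c := by
    rcases hbc with h | h
    · exact h
    · exact (htr c a b hca hab h).elim
  have hdc : R d c := by
    rcases hcd with h | h
    · exact (htr c d a h hda hca).elim
    · exact h
  rcases hbd with h | h
  · exact htr b d c h hdc hbc'
  · exact htr d b c h hbc' hdc

theorem stmt_6 {G : Type*} [Group G] [Infinite G] (W : Set G)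
    (hW : W ∩ (W⁻¹ * W) = ∅) :
    IsVast Wᶜ ∧ JVast Wᶜ ≤ 4 := by
  classical
  have hdisj : ∀ x : G, x ∈ W → x ∈ W⁻¹ * W → False := by
    intro x h1 h2
    have : x ∈ W ∩ (W⁻¹ * W) := ⟨h1, h2⟩
    rw [hW] at this
    exact this
  have h1 : (1 : G) ∉ W := by
    intro h
    exact hdisj 1 h ⟨1⁻¹, by simpa using h, 1, h, by simp⟩
  have htr : ∀ x y z : G, x⁻¹ * y ∈ W → y⁻¹ * z ∈ W → x⁻¹ * z ∈ W → False := by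
    intro x y z hxy hyz hxz
    refine hdisj (y⁻¹ * z) hyz ⟨(x⁻¹ * y)⁻¹, by simpa using hxy, x⁻¹ * z, hxz, by group⟩
  have hphi : PhiCond 4 (Wᶜ : Set G) := by
    intro P hP
    by_contra hc
    push_neg at hc
    have hR : ∀ a ∈ P, ∀ b ∈ P, a ≠ b → a⁻¹ * b ∈ W ∨ b⁻¹ * a ∈ W := by
      intro a ha b hb hne
      by_contra hcon
      push_neg at hcon
      exact hc a ha b hb hne h1 hcon.1 hcon.2
    -- extract four distinct elements of P
    obtain ⟨a, ha⟩ : ∃ a, a ∈ P := Finset.card_pos.mp (by omega) |>.imp fun _ h => h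
    have hcard3 : (P.erase a).card = 3 := by
      rw [Finset.card_erase_of_mem ha, hP]
    obtain ⟨b, c, d, hbc, hbd, hcd, hset⟩ := Finset.card_eq_three.mp hcard3
    have hbE : b ∈ P.erase a := by rw [hset]; simp
    have hcE : c ∈ P.erase a := by rw [hset]; simp
    have hdE : d ∈ P.erase a := by rw [hset]; simp
    have hb : b ∈ P := Finset.mem_of_mem_erase hbE
    have hcP : c ∈ P := Finset.mem_of_mem_erase hcE
    have hdP : d ∈ P := Finset.mem_of_mem_erase hdE
    have hab : a ≠ b := fun h => (Finset.ne_of_mem_erase hbE) h.symm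
    have hac : a ≠ c := fun h => (Finset.ne_of_mem_erase hcE) h.symm
    have had : a ≠ d := fun h => (Finset.ne_of_mem_erase hdE) h.symm
    rcases hR a ha b hb hab with h | h
    · exact tour_aux (fun x y : G => x⁻¹ * y ∈ W) htr a b c d h
        (hR a ha c hcP hac) (hR a ha d hdP had)
        (hR b hb c hcP hbc) (hR b hb d hdP hbd)
        (hR c hcP d hdP hcd)
    · exact tour_aux (fun x y : G => x⁻¹ * y ∈ W) htr b a c d h
        (hR b hb c hcP hbc) (hR b hb d hdP hbd)
        (hR a ha c hcP hac) (hR a ha d hdP had)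
        (hR c hcP d hdP hcd)
  have hmem : 4 ∈ {m : ℕ | 0 < m ∧ PhiCond m (Wᶜ : Set G)} := ⟨by norm_num, hphi⟩
  exact ⟨⟨4, by norm_num, hphi⟩, Nat.sInf_le hmem⟩
end

section
/- Suppose that G is a countably infinite group with identity e, X is a set, f : G → X is a finite-to-one surjection, 𝓕 is a free filter on G, and the image filter 𝓖 = {f(F) : F ∈ 𝓕} is a nonrapid free filter on X. Let (M_n)_{n∈ω} be a sequence of vast subsets of G. Then there exists a set ξ ⊆ G \ {e} such that: (i) ξ \ M_n is finite for each n ∈ ω; and (ii) each F ∈ 𝓕 contains elements g and h such that f(g) ≠ f(h) and g⁻¹h ∈ ξ. -/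
open Pointwise

/-- A filter is free if the intersection of all its members is empty. -/
def IsFreeFilter {X : Type*} (F : Filter X) : Prop := ⋂₀ F.sets = ∅

/-- A filter `𝓖` on `X` is nonrapid if, for every `f : ℕ → ℕ`, there is a sequence
`(T n)` of finite subsets of `X` such that every `F ∈ 𝓖` satisfies `|F ∩ T n| ≥ f n`
for some `n`. -/
def NonrapidFilter {X : Type*} (𝓖 : Filter X) : Prop :=
  ∀ f : ℕ → ℕ, ∃ T : ℕ → Finset X, ∀ F ∈ 𝓖, ∃ n : ℕ, f n ≤ (F ∩ (T n : Set X)).ncard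



open Classical in
lemma myRamsey {α : Type*} (r : α → α → Prop) (hs : ∀ a b, r a b → r b a) :
    ∀ N m k : ℕ, m + k ≤ N → ∃ n : ℕ, ∀ S : Finset α, n ≤ S.card →
      (∃ T ⊆ S, T.card = m ∧ ∀ a ∈ T, ∀ b ∈ T, a ≠ b → r a b) ∨
      (∃ T ⊆ S, T.card = k ∧ ∀ a ∈ T, ∀ b ∈ T, a ≠ b → ¬ r a b) := by
  intro N
  induction N with
  | zero =>
    intro m k h
    obtain ⟨rfl, rfl⟩ : m = 0 ∧ k = 0 := by omega
    exact ⟨0, fun S _ => Or.inl ⟨∅, Finset.empty_subset _, rfl, by simp⟩⟩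
  | succ N ih =>
    intro m k h
    match m, k with
    | 0, k => exact ⟨0, fun S _ => Or.inl ⟨∅, Finset.empty_subset _, rfl, by simp⟩⟩
    | m, 0 => exact ⟨0, fun S _ => Or.inr ⟨∅, Finset.empty_subset _, rfl, by simp⟩⟩
    | m+1, k+1 =>
      obtain ⟨n₁, hn₁⟩ := ih m (k+1) (by omega)
      obtain ⟨n₂, hn₂⟩ := ih (m+1) k (by omega)
      refine ⟨n₁ + n₂ + 1, fun S hS => ?_⟩
      have hSne : S.Nonempty := Finset.card_pos.mp (by omega)
      obtain ⟨v, hv⟩ := hSne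
      set A := (S.erase v).filter (fun u => r v u) with hA
      set B := (S.erase v).filter (fun u => ¬ r v u) with hB
      have hAB : A.card + B.card = S.card - 1 := by
        rw [hA, hB, Finset.card_filter_add_card_filter_not,
          Finset.card_erase_of_mem hv]
      have hcases : n₁ ≤ A.card ∨ n₂ ≤ B.card := by omega
      rcases hcases with hc | hc
      · rcases hn₁ A hc with ⟨T, hTA, hTc, hTr⟩ | ⟨T, hTA, hTc, hTr⟩
        · -- clique of size m in A: add v
          have hvT : v ∉ T := fun hvT => (Finset.mem_erase.mp
            ((Finset.filter_subset _ _) (hTA hvT))).1 rfl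
          refine Or.inl ⟨insert v T, ?_, ?_, ?_⟩
          · intro x hx
            rcases Finset.mem_insert.mp hx with rfl | hx
            · exact hv
            · exact (Finset.erase_subset _ _) ((Finset.filter_subset _ _) (hTA hx))
          · rw [Finset.card_insert_of_notMem hvT, hTc]
          · intro a ha b hb hab
            rcases Finset.mem_insert.mp ha with hae | ha
            · rcases Finset.mem_insert.mp hb with hbe | hb
              · exact absurd (hae.trans hbe.symm) hab
              · rw [hae]; exact (Finset.mem_filter.mp (hTA hb)).2
            · rcases Finset.mem_insert.mp hb with hbe | hb
              · rw [hbe]; exact hs _ _ (Finset.mem_filter.mp (hTA ha)).2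
              · exact hTr a ha b hb hab
        · exact Or.inr ⟨T, hTA.trans ((Finset.filter_subset _ _).trans
            (Finset.erase_subset _ _)), hTc, hTr⟩
      · rcases hn₂ B hc with ⟨T, hTB, hTc, hTr⟩ | ⟨T, hTB, hTc, hTr⟩
        · exact Or.inl ⟨T, hTB.trans ((Finset.filter_subset _ _).trans
            (Finset.erase_subset _ _)), hTc, hTr⟩
        · have hvT : v ∉ T := fun hvT => (Finset.mem_erase.mp
            ((Finset.filter_subset _ _) (hTB hvT))).1 rfl
          refine Or.inr ⟨insert v T, ?_, ?_, ?_⟩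
          · intro x hx
            rcases Finset.mem_insert.mp hx with rfl | hx
            · exact hv
            · exact (Finset.erase_subset _ _) ((Finset.filter_subset _ _) (hTB hx))
          · rw [Finset.card_insert_of_notMem hvT, hTc]
          · intro a ha b hb hab
            rcases Finset.mem_insert.mp ha with hae | ha
            · rcases Finset.mem_insert.mp hb with hbe | hb
              · exact absurd (hae.trans hbe.symm) hab
              · rw [hae]; exact (Finset.mem_filter.mp (hTB hb)).2
            · rcases Finset.mem_insert.mp hb with hbe | hb
              · rw [hbe]; exact fun hr => (Finset.mem_filter.mp (hTB ha)).2 (hs _ _ hr)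
              · exact hTr a ha b hb hab

lemma phi_one_mem {G : Type*} [Group G] [Infinite G] {m : ℕ} {M : Set G}
    (h : PhiCond m M) : (1 : G) ∈ M := by
  obtain ⟨P, hP⟩ := Infinite.exists_subset_card_eq G m
  obtain ⟨a, _, b, _, _, h1, _⟩ := h P hP
  exact h1

lemma phi_mono {G : Type*} [Group G] {m n : ℕ} {M : Set G}
    (h : PhiCond m M) (hmn : m ≤ n) : PhiCond n M := by
  intro P hP
  obtain ⟨Q, hQP, hQ⟩ := Finset.exists_subset_card_eq (s := P) (n := m) (hP ▸ hmn)
  obtain ⟨a, ha, b, hb, hr⟩ := h Q hQ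
  exact ⟨a, hQP ha, b, hQP hb, hr⟩

lemma vast_inter {G : Type*} [Group G] [Infinite G] {M N : Set G}
    (hM : IsVast M) (hN : IsVast N) : IsVast (M ∩ N) := by
  obtain ⟨m, -, hM⟩ := hM
  obtain ⟨k, -, hN⟩ := hN
  set r : G → G → Prop := fun a b => a⁻¹ * b ∈ M ∧ b⁻¹ * a ∈ M with hr
  have hs : ∀ a b, r a b → r b a := fun a b h => ⟨h.2, h.1⟩
  obtain ⟨n, hn⟩ := myRamsey r hs (k + m) k m le_rfl
  refine ⟨n + 1, Nat.succ_pos n, fun P hP => ?_⟩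
  rcases hn P (by omega) with ⟨T, hTP, hTc, hTr⟩ | ⟨T, hTP, hTc, hTr⟩
  · obtain ⟨a, ha, b, hb, hab, h1, h2, h3⟩ := hN T hTc
    obtain ⟨hm1, hm2⟩ := hTr a ha b hb hab
    exact ⟨a, hTP ha, b, hTP hb, hab, ⟨phi_one_mem hM, h1⟩, ⟨hm1, h2⟩, ⟨hm2, h3⟩⟩
  · obtain ⟨a, ha, b, hb, hab, h1, h2, h3⟩ := hM T hTc
    exact absurd ⟨h2, h3⟩ (hTr a ha b hb hab)

theorem stmt_8 {G X : Type*} [Group G] [Countable G] [Infinite G]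
    (f : G → X) (hfin : ∀ x : X, (f ⁻¹' {x}).Finite) (hsurj : Function.Surjective f)
    (𝓕 : Filter G) (hfree : IsFreeFilter 𝓕)
    (hGfree : IsFreeFilter (𝓕.map f)) (hGnr : NonrapidFilter (𝓕.map f))
    (M : ℕ → Set G) (hM : ∀ n, IsVast (M n)) :
    ∃ ξ : Set G, ξ ⊆ {(1 : G)}ᶜ ∧
      (∀ n, (ξ \ M n).Finite) ∧
      (∀ F ∈ 𝓕, ∃ g ∈ F, ∃ h ∈ F, f g ≠ f h ∧ g⁻¹ * h ∈ ξ) := by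
  classical
  -- the partial intersections
  set I : ℕ → Set G := fun n => Nat.rec (M 0) (fun k Ik => Ik ∩ M (k + 1)) n with hI
  have hIvast : ∀ n, IsVast (I n) := by
    intro n
    induction n with
    | zero => exact hM 0
    | succ k ih => exact vast_inter ih (hM (k + 1))
  have hIsub : ∀ k n, k ≤ n → I n ⊆ M k := by
    intro k n hkn
    induction n with
    | zero => obtain rfl : k = 0 := by omega
              exact subset_rfl
    | succ j ih =>
      rcases Nat.lt_or_ge k (j + 1) with h | h
      · exact (Set.inter_subset_left).trans (ih (by omega))
      · obtain rfl : k = j + 1 := by omega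
        exact Set.inter_subset_right
  -- Φ constants
  choose mfun hmpos hmphi using fun n => hIvast n
  obtain ⟨T, hT⟩ := hGnr mfun
  -- preimages of the T n are finite
  have hSfin : ∀ n, (f ⁻¹' (T n : Set X)).Finite := by
    intro n
    have : f ⁻¹' (T n : Set X) = ⋃ x ∈ (T n : Set X), f ⁻¹' {x} := by
      ext g; simp
    rw [this]
    exact Set.Finite.biUnion (T n).finite_toSet (fun x _ => hfin x)
  -- the building blocks
  set D : ℕ → Set G := fun n =>
    {g | g ∈ I n ∧ g ≠ 1 ∧ ∃ a ∈ f ⁻¹' (T n : Set X), ∃ b ∈ f ⁻¹' (T n : Set X), g = a⁻¹ * b}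
    with hD
  have hDfin : ∀ n, (D n).Finite := by
    intro n
    have : D n ⊆ (fun p : G × G => p.1⁻¹ * p.2) ''
        ((f ⁻¹' (T n : Set X)) ×ˢ (f ⁻¹' (T n : Set X))) := by
      rintro g ⟨-, -, a, ha, b, hb, rfl⟩
      exact ⟨(a, b), ⟨ha, hb⟩, rfl⟩
    exact Set.Finite.subset (Set.Finite.image _ ((hSfin n).prod (hSfin n))) this
  refine ⟨⋃ n, D n, ?_, ?_, ?_⟩
  · rintro g ⟨s, ⟨n, rfl⟩, hg⟩
    exact hg.2.1
  · intro k
    have hsub : (⋃ n, D n) \ M k ⊆ ⋃ n ∈ Set.Iio k, D n := by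
      rintro g ⟨⟨s, ⟨n, rfl⟩, hg⟩, hgk⟩
      have hnk : n < k := by
        by_contra h
        exact hgk (hIsub k n (by omega) hg.1)
      exact Set.mem_biUnion hnk hg
    exact Set.Finite.subset (Set.Finite.biUnion (Set.finite_Iio k) (fun n _ => hDfin n)) hsub
  · intro F hF
    have hFmem : f '' F ∈ 𝓕.map f := Filter.image_mem_map hF
    obtain ⟨n, hn⟩ := hT (f '' F) hFmem
    set A : Set X := f '' F ∩ (T n : Set X) with hAdef
    have hAfin : A.Finite := Set.Finite.subset (T n).finite_toSet Set.inter_subset_right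
    -- choice of representatives
    set γ : X → G := fun x => if h : ∃ g, g ∈ F ∧ f g = x then h.choose else 1 with hγ
    have hγspec : ∀ x ∈ A, γ x ∈ F ∧ f (γ x) = x := by
      rintro x ⟨⟨g, hg, rfl⟩, -⟩
      have h : ∃ g', g' ∈ F ∧ f g' = f g := ⟨g, hg, rfl⟩
      simp only [hγ, dif_pos h]
      exact h.choose_spec
    set E : Finset G := hAfin.toFinset.image γ with hE
    have hinj : Set.InjOn γ hAfin.toFinset := by
      intro x hx y hy hxy
      rw [← (hγspec x (hAfin.mem_toFinset.mp hx)).2, ← (hγspec y (hAfin.mem_toFinset.mp hy)).2,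
        hxy]
    have hEcard : E.card = A.ncard := by
      rw [hE, Finset.card_image_of_injOn hinj, ← Set.ncard_eq_toFinset_card A hAfin]
    obtain ⟨P, hPE, hPcard⟩ := Finset.exists_subset_card_eq (s := E) (n := mfun n) (by omega)
    obtain ⟨a, ha, b, hb, hab, -, habI, -⟩ := hmphi n P hPcard
    obtain ⟨x, hx, rfl⟩ := Finset.mem_image.mp (hPE ha)
    obtain ⟨y, hy, rfl⟩ := Finset.mem_image.mp (hPE hb)
    have hxA := hAfin.mem_toFinset.mp hx
    have hyA := hAfin.mem_toFinset.mp hy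
    have hgx := hγspec x hxA
    have hgy := hγspec y hyA
    refine ⟨γ x, hgx.1, γ y, hgy.1, ?_, ?_⟩
    · rw [hgx.2, hgy.2]
      rintro rfl
      exact hab rfl
    · refine Set.mem_iUnion.mpr ⟨n, ?_⟩
      refine ⟨habI, ?_, γ x, ?_, γ y, ?_, rfl⟩
      · intro h1
        exact hab (by rwa [inv_mul_eq_one] at h1)
      · show f (γ x) ∈ (T n : Set X)
        rw [hgx.2]; exact hxA.2
      · show f (γ y) ∈ (T n : Set X)
        rw [hgy.2]; exact hyA.2
end

section
/- Let G be a countably infinite Hausdorff topological group with identity e. Suppose that X is a set, f : G → X is a finite-to-one surjection, 𝓕 is a free filter on G converging to e, and the image filter 𝓖 = {f(F) : F ∈ 𝓕} is a nonrapid free filter on X. Suppose also that (U_n)_{n∈ω} is a decreasing sequence of neighborhoods of e such that U_n = U_n⁻¹, U_{n+1}³ ⊆ U_n, and ⋂_n U_n = {e}. Finally, let (H_n)_{n∈ω} be a sequence of subgroups of finite index in G. Then there exists a set ξ ⊆ G \ {e} such that: (i) ξ is discrete and e is its only limit point; (ii) each F ∈ 𝓕 contains g and h with f(g) ≠ f(h)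 and g⁻¹h ∈ ξ; (iii) ξ ∩ gU_{n+1} is finite for any n ∈ ω and any g ∈ G \ U_n; (iv) ξ \ H_n is finite for each n ∈ ω. If, in addition, U_n is syndetic for each n ∈ ω, then (v) ξ \ U_n is finite for each n ∈ ω. -/
open Pointwise

/-- A subset `D` of a topological space is discrete if every point of `D` has a
neighborhood meeting `D` only in that point. -/
def IsDiscreteSubset {X : Type*} [TopologicalSpace X] (D : Set X) : Prop :=
  ∀ x ∈ D, ∃ U ∈ nhds x, U ∩ D = {x}

/-- `x` is a limit point of `D` if every neighborhood of `x` meets `D \ {x}`. -/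
def IsLimitPoint {X : Type*} [TopologicalSpace X] (x : X) (D : Set X) : Prop :=
  ∀ U ∈ nhds x, ((D \ {x}) ∩ U).Nonempty


private def NNfn : ℕ → ℕ
  | 0 => 2
  | (c+1) => (c+1) * NNfn c + 1

private lemma NNfn_pos (c : ℕ) : 0 < NNfn c := by
  cases c <;> simp [NNfn]

private lemma ramsey_aux_s9 {G : Type*} [Group G] (C : ℕ → Set G)
    (hC : ∀ j, ∀ z ∈ C j, ∀ z' ∈ C j, z * z' ∉ C j) :
    ∀ (c : ℕ) (J : Finset ℕ), J.card = c → ∀ P : Finset G, NNfn c ≤ P.card →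
      ∃ a ∈ P, ∃ b ∈ P, a ≠ b ∧ ∀ j ∈ J, a⁻¹ * b ∉ C j := by
  classical
  intro c
  induction c with
  | zero =>
    intro J hJ P hP
    have h2 : 1 < P.card := by simp [NNfn] at hP; omega
    obtain ⟨a, ha, b, hb, hab⟩ := Finset.one_lt_card.mp h2
    have hJ0 : J = ∅ := Finset.card_eq_zero.mp hJ
    exact ⟨a, ha, b, hb, hab, by simp [hJ0]⟩
  | succ c ih =>
    intro J hJ P hP
    have hNN : NNfn (c+1) = (c+1) * NNfn c + 1 := rfl
    have hPpos : 0 < P.card := by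
      refine lt_of_lt_of_le ?_ hP
      rw [hNN]; positivity
    obtain ⟨a₀, ha₀⟩ := Finset.card_pos.mp hPpos
    set P' := P.erase a₀ with hP'def
    have hP'card : (c+1) * NNfn c ≤ P'.card := by
      have h := Finset.card_erase_of_mem ha₀
      rw [← hP'def] at h
      rw [hNN] at hP
      omega
    by_cases hex : ∃ b ∈ P', ∀ j ∈ J, a₀⁻¹ * b ∉ C j
    · obtain ⟨b, hb, hbj⟩ := hex
      exact ⟨a₀, ha₀, b, Finset.mem_of_mem_erase hb, (Finset.ne_of_mem_erase hb).symm, hbj⟩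
    · push_neg at hex
      have hsub : P' ⊆ J.biUnion (fun j => P'.filter (fun b => a₀⁻¹ * b ∈ C j)) := by
        intro b hb
        obtain ⟨j, hjJ, hjb⟩ := hex b hb
        exact Finset.mem_biUnion.mpr ⟨j, hjJ, Finset.mem_filter.mpr ⟨hb, hjb⟩⟩
      have hsum : P'.card ≤ ∑ j ∈ J, (P'.filter (fun b => a₀⁻¹ * b ∈ C j)).card :=
        le_trans (Finset.card_le_card hsub) Finset.card_biUnion_le
      have hexj : ∃ j ∈ J, NNfn c ≤ (P'.filter (fun b => a₀⁻¹ * b ∈ C j)).card := by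
        by_contra hcon
        push_neg at hcon
        have hle : ∀ j ∈ J, (P'.filter (fun b => a₀⁻¹ * b ∈ C j)).card ≤ NNfn c - 1 :=
          fun j hj => Nat.le_sub_one_of_lt (hcon j hj)
        have h1 : ∑ j ∈ J, (P'.filter (fun b => a₀⁻¹ * b ∈ C j)).card ≤ J.card * (NNfn c - 1) := by
          calc ∑ j ∈ J, (P'.filter (fun b => a₀⁻¹ * b ∈ C j)).card
              ≤ ∑ _j ∈ J, (NNfn c - 1) := Finset.sum_le_sum hle
            _ = J.card * (NNfn c - 1) := by rw [Finset.sum_const, smul_eq_mul]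
        rw [hJ] at h1
        have hp := NNfn_pos c
        have : (c+1) * NNfn c ≤ (c+1) * (NNfn c - 1) := le_trans hP'card (le_trans hsum h1)
        have h2 : (c+1) * (NNfn c - 1) + (c+1) = (c+1) * NNfn c := by
          rw [← Nat.mul_succ]
          congr 1
          omega
        omega
      obtain ⟨j₀, hj₀J, hj₀⟩ := hexj
      obtain ⟨a, ha, b, hb, hab, havoid⟩ := ih (J.erase j₀)
        (by rw [Finset.card_erase_of_mem hj₀J, hJ]; omega) _ hj₀
      have haf := Finset.mem_filter.mp ha
      have hbf := Finset.mem_filter.mp hb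
      refine ⟨a, Finset.mem_of_mem_erase haf.1, b, Finset.mem_of_mem_erase hbf.1, hab, ?_⟩
      intro j hjJ
      by_cases hjj : j = j₀
      · subst hjj
        intro hmem
        exact hC j (a₀⁻¹ * a) haf.2 (a⁻¹ * b) hmem (by simpa [mul_assoc] using hbf.2)
      · exact havoid j (Finset.mem_erase.mpr ⟨hjj, hjJ⟩)

private def Kchain {G : Type*} [Group G] (H : ℕ → Subgroup G) : ℕ → Subgroup G
  | 0 => H 0
  | (n+1) => Kchain H n ⊓ H (n+1)

private lemma Kchain_le {G : Type*} [Group G] (H : ℕ → Subgroup G) :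
    ∀ n i, i ≤ n → Kchain H n ≤ H i := by
  intro n
  induction n with
  | zero => intro i hi; obtain rfl : i = 0 := Nat.le_zero.mp hi; exact le_rfl
  | succ n ihn =>
    intro i hi
    rcases eq_or_lt_of_le hi with h | h
    · subst h; exact inf_le_right
    · exact le_trans inf_le_left (ihn i (Nat.lt_succ_iff.mp h))

private lemma Kchain_fi {G : Type*} [Group G] (H : ℕ → Subgroup G)
    (hH : ∀ n, (H n).FiniteIndex) : ∀ n, (Kchain H n).FiniteIndex := by
  intro n
  induction n with
  | zero => exact hH 0
  | succ n ihn =>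
    haveI := ihn
    haveI := hH (n+1)
    show (Kchain H n ⊓ H (n+1)).FiniteIndex
    infer_instance

theorem stmt_9 {G X : Type*} [Group G] [Countable G] [Infinite G]
    [TopologicalSpace G] [IsTopologicalGroup G] [T2Space G]
    (f : G → X) (hfin : ∀ x : X, (f ⁻¹' {x}).Finite) (hsurj : Function.Surjective f)
    (𝓕 : Filter G) (hfree : IsFreeFilter 𝓕) (hconv : 𝓕 ≤ nhds 1)
    (hGfree : IsFreeFilter (𝓕.map f)) (hGnr : NonrapidFilter (𝓕.map f))
    (U : ℕ → Set G) (hUnhds : ∀ n, U n ∈ nhds (1 : G))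
    (hUdec : ∀ n, U (n + 1) ⊆ U n) (hUsymm : ∀ n, (U n)⁻¹ = U n)
    (hUcube : ∀ n, U (n + 1) * U (n + 1) * U (n + 1) ⊆ U n)
    (hUinter : ⋂ n, U n = {(1 : G)})
    (H : ℕ → Subgroup G) (hH : ∀ n, (H n).FiniteIndex) :
    ∃ ξ : Set G, ξ ⊆ {(1 : G)}ᶜ ∧
      (IsDiscreteSubset ξ ∧ IsLimitPoint 1 ξ ∧ ∀ x, IsLimitPoint x ξ → x = 1) ∧
      (∀ F ∈ 𝓕, ∃ g ∈ F, ∃ h ∈ F, f g ≠ f h ∧ g⁻¹ * h ∈ ξ) ∧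
      (∀ n : ℕ, ∀ g ∉ U n, (ξ ∩ g • U (n + 1)).Finite) ∧
      (∀ n, (ξ \ (H n : Set G)).Finite) ∧
      ((∀ n, IsSyndetic (U n)) → ∀ n, (ξ \ U n).Finite) := by
  classical
  have hone : ∀ n, (1 : G) ∈ U n := fun n => mem_of_mem_nhds (hUnhds n)
  -- no-triangle property of balls
  have hball : ∀ (m : ℕ) (g : G), g ∉ U m →
      ∀ z ∈ g • U (m+1), ∀ z' ∈ g • U (m+1), z * z' ∉ g • U (m+1) := by
    intro m g hg z hz z' hz' hzz'
    obtain ⟨u, hu, rfl⟩ := hz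
    obtain ⟨u', hu', rfl⟩ := hz'
    obtain ⟨u'', hu'', heq⟩ := hzz'
    apply hg
    have h1 : g * u'' = g * (u * (g * u')) := by
      have h0 : g * u'' = g * u * (g * u') := by simpa [smul_eq_mul] using heq
      rw [h0]; group
    have h2 : u'' = u * (g * u') := mul_left_cancel h1
    have hgeq : g = u⁻¹ * u'' * u'⁻¹ := by rw [h2]; group
    have hinv : ∀ v : G, v ∈ U (m+1) → v⁻¹ ∈ U (m+1) := by
      intro v hv
      rw [← hUsymm (m+1)]
      exact Set.inv_mem_inv.mpr hv
    have : g ∈ U (m+1) * U (m+1) * U (m+1) := by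
      rw [hgeq]
      exact Set.mul_mem_mul (Set.mul_mem_mul (hinv u hu) hu'') (hinv u' hu')
    exact hUcube m this
  -- enumeration of balls
  obtain ⟨σ, hσ⟩ := exists_surjective_nat (ℕ × G)
  set C : ℕ → Set G := fun j =>
    if (σ j).2 ∈ U (σ j).1 then (∅ : Set G) else (σ j).2 • U ((σ j).1 + 1) with hCdef
  have hC3 : ∀ j, ∀ z ∈ C j, ∀ z' ∈ C j, z * z' ∉ C j := by
    intro j
    by_cases h : (σ j).2 ∈ U (σ j).1
    · simp [hCdef, h]
    · simpa [hCdef, h] using hball (σ j).1 (σ j).2 h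
  -- nonrapidity
  set fin' : ℕ → ℕ := fun n => (Kchain H n).index * NNfn n + 1 with hfin'def
  obtain ⟨T, hT⟩ := hGnr fin'
  set S : ℕ → Set G := fun n => f ⁻¹' ((T n : Set X)) with hSdef
  have hSfin : ∀ n, (S n).Finite := by
    intro n
    have he : S n = ⋃ x ∈ (T n : Set X), f ⁻¹' {x} := by
      ext a; simp [hSdef]
    rw [he]
    exact Set.Finite.biUnion (T n).finite_toSet (fun x _ => hfin x)
  -- the set ξ
  set Ξ : ℕ → Set G := fun n =>
    {x | x ∈ (Kchain H n : Set G) ∧ x ≠ 1 ∧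
      (∃ a ∈ S n, ∃ b ∈ S n, f a ≠ f b ∧ x = a⁻¹ * b) ∧ ∀ j, j < n → x ∉ C j} with hΞdef
  have hΞfin : ∀ n, (Ξ n).Finite := by
    intro n
    apply Set.Finite.subset (Set.Finite.image (fun p : G × G => p.1⁻¹ * p.2)
      ((hSfin n).prod (hSfin n)))
    rintro x ⟨-, -, ⟨a, ha, b, hb, -, rfl⟩, -⟩
    exact ⟨(a, b), ⟨ha, hb⟩, rfl⟩
  set ξ : Set G := ⋃ n, Ξ n with hξdef
  have hsub1 : ξ ⊆ {(1 : G)}ᶜ := by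
    intro x hx
    obtain ⟨n, hn⟩ := Set.mem_iUnion.mp hx
    exact hn.2.1
  -- (iii)
  have h3 : ∀ n : ℕ, ∀ g ∉ U n, (ξ ∩ g • U (n + 1)).Finite := by
    intro n g hg
    obtain ⟨j₀, hj₀⟩ := hσ (n, g)
    have hCj₀ : C j₀ = g • U (n+1) := by
      have h1 : (σ j₀).1 = n := by rw [hj₀]
      have h2 : (σ j₀).2 = g := by rw [hj₀]
      simp only [hCdef, h1, h2, if_neg hg]
    have hcov : ξ ∩ g • U (n+1) ⊆ ⋃ m ∈ Finset.range (j₀+1), Ξ m := by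
      rintro x ⟨hxξ, hxb⟩
      obtain ⟨m, hm⟩ := Set.mem_iUnion.mp hxξ
      have hmle : m ≤ j₀ := by
        by_contra hcon
        exact hm.2.2.2 j₀ (by omega) (hCj₀ ▸ hxb)
      exact Set.mem_biUnion (Finset.mem_range.mpr (by omega)) hm
    exact Set.Finite.subset (Set.Finite.biUnion (Finset.range (j₀+1)).finite_toSet
      (fun m _ => hΞfin m)) hcov
  -- (ii)
  have key2 : ∀ F ∈ 𝓕, ∃ g ∈ F, ∃ h ∈ F, f g ≠ f h ∧ g⁻¹ * h ∈ ξ := by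
    intro F hF
    obtain ⟨n, hn⟩ := hT (f '' F) (Filter.image_mem_map hF)
    set Y : Set X := f '' F ∩ (T n : Set X) with hYdef
    have hYfin : Y.Finite := Set.Finite.inter_of_right (T n).finite_toSet _
    have hrepex : ∀ x ∈ Y, ∃ a, a ∈ F ∧ f a = x := by
      rintro x ⟨⟨a, haF, rfl⟩, -⟩
      exact ⟨a, haF, rfl⟩
    choose rep hrepF hrepf using hrepex
    set ρ : X → G := fun x => if hx : x ∈ Y then rep x hx else 1 with hρdef
    have hρf : ∀ x (hx : x ∈ Y), f (ρ x) = x := by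
      intro x hx
      simp only [hρdef, dif_pos hx]
      exact hrepf x hx
    have hρF : ∀ x (hx : x ∈ Y), ρ x ∈ F := by
      intro x hx
      simp only [hρdef, dif_pos hx]
      exact hrepF x hx
    set P₀ : Finset G := hYfin.toFinset.image ρ with hP₀def
    have hmemY : ∀ a ∈ P₀, ∃ hx : f a ∈ Y, ρ (f a) = a := by
      intro a ha
      obtain ⟨x, hx, rfl⟩ := Finset.mem_image.mp ha
      have hxY : x ∈ Y := hYfin.mem_toFinset.mp hx
      have hfx : f (ρ x) = x := hρf x hxY
      exact ⟨by rw [hfx]; exact hxY, by rw [hfx]⟩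
    have hP₀F : ∀ a ∈ P₀, a ∈ F := by
      intro a ha
      obtain ⟨hx, hfx⟩ := hmemY a ha
      rw [← hfx]
      exact hρF _ hx
    have hP₀S : ∀ a ∈ P₀, a ∈ S n := by
      intro a ha
      obtain ⟨hx, -⟩ := hmemY a ha
      exact hx.2
    have hP₀inj : ∀ a ∈ P₀, ∀ b ∈ P₀, a ≠ b → f a ≠ f b := by
      intro a ha b hb hab hfab
      obtain ⟨hxa, hfa⟩ := hmemY a ha
      obtain ⟨hxb, hfb⟩ := hmemY b hb
      exact hab (by rw [← hfa, ← hfb, hfab])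
    have hP₀card : fin' n ≤ P₀.card := by
      have hinj : Set.InjOn ρ hYfin.toFinset := by
        intro x hx y hy hxy
        have hxY := hYfin.mem_toFinset.mp hx
        have hyY := hYfin.mem_toFinset.mp hy
        rw [← hρf x hxY, ← hρf y hyY, hxy]
      rw [hP₀def, Finset.card_image_of_injOn hinj, ← Set.ncard_eq_toFinset_card Y hYfin]
      exact hn
    -- pigeonhole into cosets of Kchain H n
    haveI : (Kchain H n).FiniteIndex := Kchain_fi H hH n
    haveI : Finite (G ⧸ Kchain H n) := Subgroup.finite_quotient_of_finiteIndex (H := Kchain H n)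
    haveI : Fintype (G ⧸ Kchain H n) := Fintype.ofFinite _
    set φ : G → G ⧸ Kchain H n := QuotientGroup.mk with hφdef
    have hfiber : ∃ q : G ⧸ Kchain H n, NNfn n ≤ (P₀.filter (fun a => φ a = q)).card := by
      by_contra hcon
      push_neg at hcon
      have hsum := Finset.card_eq_sum_card_fiberwise
        (fun x hx => Finset.mem_image_of_mem φ hx : ∀ x ∈ P₀, φ x ∈ P₀.image φ)
      have hle : ∑ q ∈ P₀.image φ, (P₀.filter (fun a => φ a = q)).card
          ≤ (P₀.image φ).card * (NNfn n - 1) := by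
        calc ∑ q ∈ P₀.image φ, (P₀.filter (fun a => φ a = q)).card
            ≤ ∑ _q ∈ P₀.image φ, (NNfn n - 1) :=
              Finset.sum_le_sum (fun q _ => Nat.le_sub_one_of_lt (hcon q))
          _ = (P₀.image φ).card * (NNfn n - 1) := by rw [Finset.sum_const, smul_eq_mul]
      have himg : (P₀.image φ).card ≤ (Kchain H n).index := by
        have h1 : (P₀.image φ).card ≤ Fintype.card (G ⧸ Kchain H n) := Finset.card_le_univ _
        rwa [Subgroup.index, Nat.card_eq_fintype_card]
      have hmul1 : (P₀.image φ).card * (NNfn n - 1) ≤ (Kchain H n).index * NNfn n :=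
        Nat.mul_le_mul himg (Nat.sub_le _ _)
      have hfull : fin' n ≤ (Kchain H n).index * NNfn n := by
        calc fin' n ≤ P₀.card := hP₀card
          _ = _ := hsum
          _ ≤ _ := le_trans hle hmul1
      simp only [hfin'def] at hfull
      omega
    obtain ⟨q, hq⟩ := hfiber
    obtain ⟨a, haQ, b, hbQ, hab, havoid⟩ :=
      ramsey_aux_s9 C hC3 n (Finset.range n) (Finset.card_range n) _ hq
    have haP₀ := (Finset.mem_filter.mp haQ).1
    have hbP₀ := (Finset.mem_filter.mp hbQ).1
    refine ⟨a, hP₀F a haP₀, b, hP₀F b hbP₀, hP₀inj a haP₀ b hbP₀ hab, ?_⟩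
    apply Set.mem_iUnion.mpr
    refine ⟨n, ?_, ?_, ⟨a, hP₀S a haP₀, b, hP₀S b hbP₀, hP₀inj a haP₀ b hbP₀ hab, rfl⟩, ?_⟩
    · have hqa : φ a = q := (Finset.mem_filter.mp haQ).2
      have hqb : φ b = q := (Finset.mem_filter.mp hbQ).2
      have : φ a = φ b := by rw [hqa, hqb]
      exact SetLike.mem_coe.mpr (QuotientGroup.eq.mp this)
    · intro h1
      exact hab (inv_mul_eq_one.mp h1)
    · intro j hj
      exact havoid j (Finset.mem_range.mpr hj)
  -- (iv)
  have h4 : ∀ i, (ξ \ (H i : Set G)).Finite := by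
    intro i
    have hcov : ξ \ (H i : Set G) ⊆ ⋃ m ∈ Finset.range i, Ξ m := by
      rintro x ⟨hxξ, hxH⟩
      obtain ⟨m, hm⟩ := Set.mem_iUnion.mp hxξ
      have hmi : m < i := by
        by_contra hcon
        exact hxH (Kchain_le H m i (by omega) hm.1)
      exact Set.mem_biUnion (Finset.mem_range.mpr hmi) hm
    exact Set.Finite.subset (Set.Finite.biUnion (Finset.range i).finite_toSet
      (fun m _ => hΞfin m)) hcov
  -- (v)
  have h5 : (∀ n, IsSyndetic (U n)) → ∀ n, (ξ \ U n).Finite := by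
    intro hsyn n
    obtain ⟨T', hT'⟩ := hsyn (n+2)
    have hcov : ξ \ U n ⊆
        ⋃ t ∈ ((T'.filter (fun t => t ∉ U (n+1)) : Finset G) : Set G), ξ ∩ t • U (n+2) := by
      rintro x ⟨hxξ, hxU⟩
      have hx : x ∈ (T' : Set G) * U (n+2) := by rw [hT']; trivial
      obtain ⟨t, ht, u, hu, hx⟩ := Set.mem_mul.mp hx
      have htU : t ∉ U (n+1) := by
        intro htU
        apply hxU
        have : t * u * 1 ∈ U (n+1) * U (n+1) * U (n+1) :=
          Set.mul_mem_mul (Set.mul_mem_mul htU (hUdec (n+1) hu)) (hone (n+1))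
        rw [mul_one] at this
        rw [← hx]
        exact hUcube n this
      have hxball : x ∈ t • U (n+2) := by
        rw [← hx, ← smul_eq_mul]
        exact Set.smul_mem_smul_set hu
      exact Set.mem_biUnion (Finset.mem_coe.mpr (Finset.mem_filter.mpr ⟨ht, htU⟩))
        ⟨hxξ, hxball⟩
    apply Set.Finite.subset ?_ hcov
    apply Set.Finite.biUnion (Finset.finite_toSet _)
    intro t ht
    exact h3 (n+1) t (Finset.mem_filter.mp (Finset.mem_coe.mp ht)).2
  -- neighborhood facts
  have hdepth : ∀ x : G, x ≠ 1 → ∃ m, x ∉ U m := by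
    intro x hx
    by_contra hcon
    push_neg at hcon
    have : x ∈ ⋂ n, U n := Set.mem_iInter.mpr hcon
    rw [hUinter] at this
    exact hx this
  have hnbhd : ∀ (x₀ : G) (m : ℕ), x₀ • U m ∈ nhds x₀ := by
    intro x₀ m
    have h1 : Filter.map (fun y => x₀ * y) (nhds 1) = nhds x₀ := by
      simpa using (Homeomorph.mulLeft x₀).map_nhds_eq 1
    have h2 : (fun y => x₀ * y) '' U m ∈ Filter.map (fun y => x₀ * y) (nhds 1) :=
      Filter.image_mem_map (hUnhds m)
    rw [h1] at h2
    have h3' : (fun y => x₀ * y) '' U m = x₀ • U m := rfl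
    rwa [h3'] at h2
  have hW : ∀ x₀ : G, x₀ ≠ 1 → ∃ W ∈ nhds x₀, W ∩ ξ ⊆ {x₀} ∧ x₀ ∈ W := by
    intro x₀ hx₀
    obtain ⟨m, hm⟩ := hdepth x₀ hx₀
    have hfin' := h3 m x₀ hm
    set bad : Set G := (ξ ∩ x₀ • U (m+1)) \ {x₀} with hbaddef
    have hbadfin : bad.Finite := hfin'.subset Set.diff_subset
    have hbadcl : IsClosed bad := hbadfin.isClosed
    have hx₀bad : x₀ ∉ bad := fun hx => hx.2 rfl
    have hWmem : (x₀ • U (m+1)) ∩ badᶜ ∈ nhds x₀ :=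
      Filter.inter_mem (hnbhd x₀ (m+1)) (hbadcl.isOpen_compl.mem_nhds hx₀bad)
    refine ⟨_, hWmem, ?_, ?_⟩
    · rintro y ⟨⟨hyb, hybad⟩, hyξ⟩
      by_contra hy
      exact hybad ⟨⟨hyξ, hyb⟩, hy⟩
    · exact ⟨⟨1, hone (m+1), by simp [smul_eq_mul]⟩, hx₀bad⟩
  -- (i)
  have hdisc : IsDiscreteSubset ξ := by
    intro x hx
    have hx1 : x ≠ 1 := hsub1 hx
    obtain ⟨W, hWn, hWsub, hxW⟩ := hW x hx1
    refine ⟨W, hWn, ?_⟩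
    apply Set.Subset.antisymm hWsub
    exact Set.singleton_subset_iff.mpr ⟨hxW, hx⟩
  have hlim1 : IsLimitPoint 1 ξ := by
    intro W hWn
    have hcont : ContinuousAt (fun p : G × G => p.1⁻¹ * p.2) (1, 1) :=
      (continuous_fst.inv.mul continuous_snd).continuousAt
    have hpre : (fun p : G × G => p.1⁻¹ * p.2) ⁻¹' W ∈ nhds ((1 : G), (1 : G)) :=
      hcont.preimage_mem_nhds (by simpa using hWn)
    rw [nhds_prod_eq] at hpre
    obtain ⟨V₁, hV₁, V₂, hV₂, hVsub⟩ := Filter.mem_prod_iff.mp hpre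
    have hV : V₁ ∩ V₂ ∈ 𝓕 := hconv (Filter.inter_mem hV₁ hV₂)
    obtain ⟨g, hg, h, hh, hfgh, hgh⟩ := key2 _ hV
    refine ⟨g⁻¹ * h, ⟨⟨hgh, ?_⟩, ?_⟩⟩
    · intro h1
      exact hfgh (by rw [inv_mul_eq_one.mp (Set.mem_singleton_iff.mp h1)])
    · exact hVsub (Set.mk_mem_prod hg.1 hh.2)
  have hlimu : ∀ x, IsLimitPoint x ξ → x = 1 := by
    intro x hx
    by_contra hne
    obtain ⟨W, hWn, hWsub, -⟩ := hW x hne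
    obtain ⟨y, ⟨hyξ, hyx⟩, hyW⟩ := hx W hWn
    exact hyx (hWsub ⟨hyW, hyξ⟩)
  exact ⟨ξ, hsub1, ⟨hdisc, hlim1, hlimu⟩, key2, h3, h4, h5⟩
end

section
/- Assume that there are no rapid ultrafilters on ω. Let G be a countably infinite Hausdorff topological group with identity e, let Y ⊆ G satisfy e ∈ cl(Y) \ Y, and let {Y_n : n ∈ ω} be a partition of Y into finite subsets. Then there exists a set ξ ⊆ G \ {e} such that: (i) ξ is discrete and e is its only limit point; and (ii) ξ ⊆ ⋃_{i≠j} Y_i⁻¹ Y_j. -/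
open Pointwise

/-- An ultrafilter `𝓤` on `ℕ` is rapid if it is free and every function `ℕ → ℕ` is
majorized by the increasing enumeration of some member of `𝓤`; the latter holds for a
member `F` iff for each `n` the set `F` has at most `n` elements below `f n`. -/
def IsRapidUltrafilter (𝓤 : Ultrafilter ℕ) : Prop :=
  IsFreeFilter (𝓤 : Filter ℕ) ∧
  ∀ f : ℕ → ℕ, ∃ F ∈ 𝓤, ∀ n : ℕ, (F ∩ Set.Iio (f n)).ncard ≤ n

section AuxTop

variable {G : Type*} [Group G] [TopologicalSpace G] [IsTopologicalGroup G]

private lemma exists_inv_mul_subset' {V : Set G} (hV : V ∈ nhds (1 : G)) :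
    ∃ U ∈ nhds (1 : G), ∀ a ∈ U, ∀ b ∈ U, a⁻¹ * b ∈ V := by
  have hc : Continuous fun p : G × G => p.1⁻¹ * p.2 :=
    (continuous_fst.inv).mul continuous_snd
  have hca := hc.continuousAt (x := ((1 : G), (1 : G)))
  have hpre : (fun p : G × G => p.1⁻¹ * p.2) ⁻¹' V ∈ nhds (((1 : G), (1 : G)) : G × G) := by
    apply hca
    simpa using hV
  rw [nhds_prod_eq, Filter.mem_prod_iff] at hpre
  obtain ⟨U₁, h₁, U₂, h₂, hsub⟩ := hpre
  refine ⟨U₁ ∩ U₂, Filter.inter_mem h₁ h₂, fun a ha b hb => ?_⟩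
  exact hsub (Set.mk_mem_prod ha.1 hb.2)

variable [T2Space G]

private lemma stage' (z : G) (hz : z ≠ 1) (C : Set G) (hC : IsClosed C) (h1C : (1:G) ∉ C) :
    ∃ K N : Set G, IsClosed K ∧ z ∈ interior K ∧ (1:G) ∉ K ∧
      (∀ a ∈ K, ∀ b ∈ K, a⁻¹ * b ∈ N) ∧ N ∩ (C ∪ K) = ∅ := by
  obtain ⟨A, B₀, hA, hB₀, hzA, h1B, hAB⟩ := t2_separation hz
  set B₁ := B₀ ∩ Cᶜ with hB₁def
  have hB₁o : IsOpen B₁ := hB₀.inter hC.isOpen_compl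
  have h1B₁ : (1:G) ∈ B₁ := ⟨h1B, h1C⟩
  obtain ⟨W₁, hW₁, hW₁p⟩ := exists_inv_mul_subset' (hB₁o.mem_nhds h1B₁)
  have hW₂ : {w : G | z * w ∈ A} ∈ nhds (1:G) := by
    have hcont : Continuous fun w : G => z * w := continuous_const.mul continuous_id
    have : A ∈ nhds (z * 1) := by simpa using hA.mem_nhds hzA
    exact hcont.continuousAt.preimage_mem_nhds this
  obtain ⟨R, ⟨hRmem, hRclosed⟩, hRsub⟩ :=
    (closed_nhds_basis (1:G)).mem_iff.mp (Filter.inter_mem hW₁ hW₂)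
  have hRW₁ : R ⊆ W₁ := fun x hx => (hRsub hx).1
  have hRW₂ : R ⊆ {w : G | z * w ∈ A} := fun x hx => (hRsub hx).2
  refine ⟨(fun w => z * w) '' R, B₁, ?_, ?_, ?_, ?_, ?_⟩
  · exact (Homeomorph.mulLeft z).isClosedMap R hRclosed
  · have : interior ((fun w => z * w) '' R) = (fun w => z * w) '' interior R := by
      exact ((Homeomorph.mulLeft z).image_interior R).symm
    rw [this]
    exact ⟨1, mem_interior_iff_mem_nhds.mpr hRmem, mul_one z⟩
  · rintro ⟨r, hrR, hr1⟩
    simp only at hr1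
    have hmem : z * r ∈ A := hRW₂ hrR
    rw [hr1] at hmem
    exact (Set.disjoint_left.mp hAB) hmem h1B
  · rintro a ⟨r₁, hr₁, rfl⟩ b ⟨r₂, hr₂, rfl⟩
    have : (z * r₁)⁻¹ * (z * r₂) = r₁⁻¹ * r₂ := by group
    rw [this]
    exact hW₁p r₁ (hRW₁ hr₁) r₂ (hRW₁ hr₂)
  · apply Set.eq_empty_iff_forall_notMem.mpr
    rintro x ⟨hxB₁, hxCK⟩
    rcases hxCK with hxC | ⟨r, hrR, rfl⟩
    · exact hxB₁.2 hxC
    · exact (Set.disjoint_left.mp hAB) (hRW₂ hrR) hxB₁.1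

end AuxTop

private lemma nonrapid_of_no_rapid
    (hnorapid : ∀ 𝓤 : Ultrafilter ℕ, ¬ IsRapidUltrafilter 𝓤)
    (φ : Filter ℕ) [hne : φ.NeBot] (hco : φ ≤ Filter.cofinite) :
    NonrapidFilter φ := by
  intro f
  by_contra hcon
  push_neg at hcon
  set f₁ : ℕ → ℕ := fun n => (Finset.range (n+1)).sup f + n + 1 with hf₁def
  have hf₁mono : Monotone f₁ := by
    intro a b hab
    have h1 : (Finset.range (a+1)).sup f ≤ (Finset.range (b+1)).sup f :=
      Finset.sup_mono (Finset.range_subset_range.mpr (by omega))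
    simp only [hf₁def]
    omega
  have hf₁lt : ∀ n, n < f₁ n := by intro n; simp only [hf₁def]; omega
  have hf₁f : ∀ n, f n ≤ f₁ n := by
    intro n
    have : f n ≤ (Finset.range (n+1)).sup f :=
      Finset.le_sup (Finset.self_mem_range_succ n)
    simp only [hf₁def]; omega
  set 𝓤 := Ultrafilter.of φ with h𝓤def
  have hle : (𝓤 : Filter ℕ) ≤ φ := Ultrafilter.of_le φ
  have hcole : (𝓤 : Filter ℕ) ≤ Filter.cofinite := le_trans hle hco
  apply hnorapid 𝓤
  constructor
  · apply Set.eq_empty_iff_forall_notMem.mpr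
    intro x hx
    have hmem : ({x}ᶜ : Set ℕ) ∈ (𝓤 : Filter ℕ) := by
      apply hcole
      simp [Filter.mem_cofinite]
    exact (hx _ hmem) rfl
  · intro h
    set hb : ℕ → ℕ := fun m => (Finset.range (m+1)).sup h with hhbdef
    have hhbmono : Monotone hb := by
      intro a b hab
      exact Finset.sup_mono (Finset.range_subset_range.mpr (by omega))
    have hhhb : ∀ m, h m ≤ hb m := fun m => Finset.le_sup (Finset.self_mem_range_succ m)
    obtain ⟨F₀, hF₀φ, hF₀⟩ := hcon (fun n => Finset.range (hb (f₁ (n+1))))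
    have hF₀' : ∀ n, (F₀ ∩ Set.Iio (hb (f₁ (n+1)))).ncard < f₁ n := by
      intro n
      have h2 := hF₀ n
      rw [Finset.coe_range] at h2
      exact lt_of_lt_of_le h2 (hf₁f n)
    refine ⟨F₀ ∩ (Set.Iio (hb (f₁ 0)))ᶜ, ?_, ?_⟩
    · apply Filter.inter_mem (hle hF₀φ)
      apply hcole
      simp [Filter.mem_cofinite, Set.finite_Iio]
    · intro m
      by_cases hm : m < f₁ 0
      · have hempty : (F₀ ∩ (Set.Iio (hb (f₁ 0)))ᶜ) ∩ Set.Iio (h m) = ∅ := by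
          apply Set.eq_empty_iff_forall_notMem.mpr
          rintro x ⟨⟨-, hx2⟩, hx3⟩
          apply hx2
          have h1 : x < h m := hx3
          have h2 : h m ≤ hb m := hhhb m
          have h3 : hb m ≤ hb (f₁ 0) := hhbmono (by omega)
          exact Set.mem_Iio.mpr (by omega)
        rw [hempty]
        simp
      · push_neg at hm
        set Ks := (Finset.range (m+1)).filter (fun k => f₁ k ≤ m) with hKsdef
        have hKsne : Ks.Nonempty := ⟨0, by simp [hKsdef]; omega⟩
        set K := Ks.max' hKsne with hKdef
        have hKmem : K ∈ Ks := Ks.max'_mem hKsne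
        have hfK : f₁ K ≤ m := (Finset.mem_filter.mp hKmem).2
        have hKlt : K < m + 1 := Finset.mem_range.mp (Finset.mem_filter.mp hKmem).1
        have hnext : m < f₁ (K+1) := by
          by_contra hcon2
          push_neg at hcon2
          have hK1m : K + 1 < m + 1 := by
            have := hf₁lt (K+1); omega
          have hK1 : K + 1 ∈ Ks := Finset.mem_filter.mpr ⟨Finset.mem_range.mpr hK1m, hcon2⟩
          have := Ks.le_max' (K+1) hK1
          omega
        have hsub : (F₀ ∩ (Set.Iio (hb (f₁ 0)))ᶜ) ∩ Set.Iio (h m)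
            ⊆ F₀ ∩ Set.Iio (hb (f₁ (K+1))) := by
          rintro x ⟨⟨hx1, -⟩, hx3⟩
          refine ⟨hx1, ?_⟩
          have h1 : x < h m := hx3
          have h2 : h m ≤ hb m := hhhb m
          have h3 : hb m ≤ hb (f₁ (K+1)) := hhbmono (by omega)
          exact Set.mem_Iio.mpr (by omega)
        have hcard := Set.ncard_le_ncard hsub ((Set.finite_Iio _).inter_of_right _)
        have := hF₀' K
        omega

theorem stmt_10 {G : Type*} [Group G] [Countable G] [Infinite G]
    [TopologicalSpace G] [IsTopologicalGroup G] [T2Space G]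
    (hnorapid : ∀ 𝓤 : Ultrafilter ℕ, ¬ IsRapidUltrafilter 𝓤)
    (Y : Set G) (hY : (1 : G) ∈ closure Y \ Y)
    (Yp : ℕ → Set G) (hfin : ∀ n, (Yp n).Finite)
    (hdisj : ∀ i j : ℕ, i ≠ j → Disjoint (Yp i) (Yp j))
    (hunion : ⋃ n, Yp n = Y) :
    ∃ ξ : Set G, ξ ⊆ {(1 : G)}ᶜ ∧
      (IsDiscreteSubset ξ ∧ IsLimitPoint 1 ξ ∧ ∀ x, IsLimitPoint x ξ → x = 1) ∧
      ξ ⊆ ⋃ (i : ℕ) (j : ℕ) (_ : i ≠ j), (Yp i)⁻¹ * Yp j := by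
  classical
  have h1Y : (1:G) ∉ Y := hY.2
  have hYsub : ∀ i, Yp i ⊆ Y := by
    intro i
    rw [← hunion]
    exact Set.subset_iUnion Yp i
  -- enumeration of G \ {1}
  obtain ⟨x0, hx0⟩ := exists_ne (1 : G)
  haveI : Nonempty {x : G // x ≠ 1} := ⟨⟨x0, hx0⟩⟩
  obtain ⟨z0, hz0surj⟩ := exists_surjective_nat {x : G // x ≠ 1}
  set z : ℕ → G := fun t => (z0 t).1 with hzdef
  have hz : ∀ t, z t ≠ 1 := fun t => (z0 t).2
  have hzsurj : ∀ x : G, x ≠ 1 → ∃ t, z t = x := by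
    intro x hx
    obtain ⟨t, ht⟩ := hz0surj ⟨x, hx⟩
    exact ⟨t, congrArg Subtype.val ht⟩
  -- the closed-neighborhood sequence K with product control N
  have hstep : ∀ (t : ℕ) (C : Set G), IsClosed C → (1:G) ∉ C →
      ∃ KN : Set G × Set G, IsClosed KN.1 ∧ z t ∈ interior KN.1 ∧ (1:G) ∉ KN.1 ∧
        (∀ a ∈ KN.1, ∀ b ∈ KN.1, a⁻¹ * b ∈ KN.2) ∧ KN.2 ∩ (C ∪ KN.1) = ∅ := by
    intro t C hC h1C
    obtain ⟨K, N, h1, h2, h3, h4, h5⟩ := stage' (z t) (hz t) C hC h1C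
    exact ⟨(K, N), h1, h2, h3, h4, h5⟩
  let pick : ∀ (t : ℕ), {C : Set G // IsClosed C ∧ (1:G) ∉ C} → Set G × Set G :=
    fun t C => (hstep t C.1 C.2.1 C.2.2).choose
  have hpick : ∀ t C, IsClosed (pick t C).1 ∧ z t ∈ interior (pick t C).1 ∧
      (1:G) ∉ (pick t C).1 ∧
      (∀ a ∈ (pick t C).1, ∀ b ∈ (pick t C).1, a⁻¹ * b ∈ (pick t C).2) ∧
      (pick t C).2 ∩ (C.1 ∪ (pick t C).1) = ∅ :=
    fun t C => (hstep t C.1 C.2.1 C.2.2).choose_spec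
  let A : ℕ → {C : Set G // IsClosed C ∧ (1:G) ∉ C} :=
    fun t => Nat.rec ⟨∅, isClosed_empty, Set.notMem_empty 1⟩
      (fun k Ck => ⟨Ck.1 ∪ (pick k Ck).1, Ck.2.1.union (hpick k Ck).1, by
        intro hmem
        rcases hmem with hmem | hmem
        · exact Ck.2.2 hmem
        · exact (hpick k Ck).2.2.1 hmem⟩) t
  let K : ℕ → Set G := fun t => (pick t (A t)).1
  let N : ℕ → Set G := fun t => (pick t (A t)).2
  have hA_succ : ∀ t, (A (t+1)).1 = (A t).1 ∪ K t := fun t => rfl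
  have hAmono : ∀ s t, s ≤ t → (A s).1 ⊆ (A t).1 := by
    intro s t hst
    induction t, hst using Nat.le_induction with
    | base => exact subset_rfl
    | succ t ht ih =>
        refine ih.trans ?_
        rw [hA_succ]
        exact Set.subset_union_left
  have hKsubA : ∀ t, K t ⊆ (A (t+1)).1 := by
    intro t
    rw [hA_succ]
    exact Set.subset_union_right
  have hKN : ∀ t τ, t ≤ τ → K t ∩ N τ = ∅ := by
    intro t τ htτ
    have hdisj2 := (hpick τ (A τ)).2.2.2.2
    apply Set.eq_empty_iff_forall_notMem.mpr
    rintro x ⟨hxK, hxN⟩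
    have hxin : x ∈ (A τ).1 ∪ K τ := by
      rcases Nat.lt_or_ge t τ with hlt | hge
      · exact Or.inl (hAmono (t+1) τ hlt (hKsubA t hxK))
      · have : t = τ := le_antisymm htτ hge
        subst this
        exact Or.inr hxK
    exact Set.eq_empty_iff_forall_notMem.mp hdisj2 x ⟨hxN, hxin⟩
  have hKclosed : ∀ t, IsClosed (K t) := fun t => (hpick t (A t)).1
  have hKint : ∀ t, z t ∈ interior (K t) := fun t => (hpick t (A t)).2.1
  have hKprod : ∀ t, ∀ a ∈ K t, ∀ b ∈ K t, a⁻¹ * b ∈ N t :=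
    fun t => (hpick t (A t)).2.2.2.1
  -- block index function
  set c : G → ℕ := fun g => if h : ∃ n, g ∈ Yp n then h.choose else 0 with hcdef
  have hcY : ∀ y ∈ Y, y ∈ Yp (c y) := by
    intro y hy
    rw [← hunion] at hy
    obtain ⟨n, hn⟩ := Set.mem_iUnion.mp hy
    have hex : ∃ n, y ∈ Yp n := ⟨n, hn⟩
    simp only [hcdef, dif_pos hex]
    exact hex.choose_spec
  -- the pushforward filter
  set φ : Filter ℕ := Filter.map c (nhds (1:G) ⊓ Filter.principal Y) with hφdef
  haveI hbase : Filter.NeBot (nhds (1:G) ⊓ Filter.principal Y) :=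
    mem_closure_iff_clusterPt.mp hY.1
  haveI : φ.NeBot := Filter.map_neBot
  have hφco : φ ≤ Filter.cofinite := by
    intro S hS
    rw [Filter.mem_cofinite] at hS
    rw [hφdef, Filter.mem_map]
    set B : Set G := ⋃ i ∈ Sᶜ, Yp i with hBdef
    have hBfin : B.Finite := Set.Finite.biUnion hS (fun i _ => hfin i)
    have hBY : B ⊆ Y := by
      intro x hx
      simp only [hBdef, Set.mem_iUnion] at hx
      obtain ⟨i, -, hxi⟩ := hx
      exact hYsub i hxi
    have h1B : (1:G) ∉ B := fun hmem => h1Y (hBY hmem)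
    have hBc : Bᶜ ∈ nhds (1:G) := (hBfin.isClosed.isOpen_compl).mem_nhds h1B
    have hsub : Bᶜ ∩ Y ⊆ c ⁻¹' S := by
      rintro y ⟨hyB, hyY⟩
      by_contra hyS
      apply hyB
      simp only [hBdef, Set.mem_iUnion]
      exact ⟨c y, hyS, hcY y hyY⟩
    exact Filter.mem_of_superset (Filter.inter_mem_inf hBc (Filter.mem_principal_self Y)) hsub
  have hnr : NonrapidFilter φ := nonrapid_of_no_rapid hnorapid φ hφco
  obtain ⟨T, hT⟩ := hnr (fun n => (n+3)^(n+3))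
  -- the set ξ
  set D : ℕ → Set G := fun n => ⋃ t ∈ Set.Iic n, K t with hDdef
  set Ξ : ℕ → Set G := fun n =>
    {x | (∃ i ∈ T n, ∃ j ∈ T n, i ≠ j ∧ ∃ y ∈ Yp i, ∃ y' ∈ Yp j, x = y⁻¹ * y') ∧ x ∉ D n}
    with hΞdef
  set ξ : Set G := ⋃ n, Ξ n with hξdef
  have hKD : ∀ t n, t ≤ n → K t ⊆ D n := by
    intro t n hle x hx
    simp only [hDdef, Set.mem_iUnion]
    exact ⟨t, hle, hx⟩
  have hΞfin : ∀ n, (Ξ n).Finite := by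
    intro n
    have hsub : Ξ n ⊆ Set.image2 (fun a b => a⁻¹ * b)
        (⋃ i ∈ (T n : Set ℕ), Yp i) (⋃ i ∈ (T n : Set ℕ), Yp i) := by
      rintro x ⟨⟨i, hi, j, hj, hij, y, hy, y', hy', rfl⟩, -⟩
      exact Set.mem_image2_of_mem (Set.mem_biUnion hi hy) (Set.mem_biUnion hj hy')
    exact Set.Finite.subset (Set.Finite.image2 _
      ((T n).finite_toSet.biUnion (fun i _ => hfin i))
      ((T n).finite_toSet.biUnion (fun i _ => hfin i))) hsub
  have hξne1 : ∀ x ∈ ξ, x ≠ (1:G) := by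
    rintro x hx rfl
    obtain ⟨n, hn⟩ := Set.mem_iUnion.mp hx
    obtain ⟨⟨i, hi, j, hj, hij, y, hy, y', hy', heq⟩, -⟩ := hn
    have hyy : y = y' := inv_mul_eq_one.mp heq.symm
    exact (Set.disjoint_left.mp (hdisj i j hij)) hy (hyy ▸ hy')
  -- local isolation of every point ≠ 1
  have hloc : ∀ x : G, x ≠ 1 → ∃ W : Set G, IsOpen W ∧ x ∈ W ∧ W ∩ ξ ⊆ {x} := by
    intro x hx
    obtain ⟨t, hzt⟩ := hzsurj x hx
    set J : Set G := ⋃ n ∈ Set.Iio t, Ξ n with hJdef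
    have hJfin : (J \ {x}).Finite :=
      (Set.Finite.biUnion (Set.finite_Iio t) (fun n _ => hΞfin n)).diff
    set W : Set G := interior (K t) \ (J \ {x}) with hWdef
    have hWopen : IsOpen W := isOpen_interior.sdiff hJfin.isClosed
    have hxW : x ∈ W := by
      constructor
      · rw [← hzt]; exact hKint t
      · intro hmem
        exact hmem.2 rfl
    refine ⟨W, hWopen, hxW, ?_⟩
    rintro w ⟨⟨hwK, hwJ⟩, hwξ⟩
    obtain ⟨n, hn⟩ := Set.mem_iUnion.mp hwξ
    rcases Nat.lt_or_ge n t with hnt | hnt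
    · by_contra hwx
      exact hwJ ⟨Set.mem_biUnion hnt hn, hwx⟩
    · exact (hn.2 (hKD t n hnt (interior_subset hwK))).elim
  -- 1 is a limit point: the descent argument
  have hΩ : ∀ U ∈ nhds (1:G), ∃ x ∈ ξ, ∃ a ∈ U, ∃ b ∈ U, x = a⁻¹ * b := by
    intro U hU
    have hFφ : c '' (U ∩ Y) ∈ φ := by
      rw [hφdef]
      exact Filter.image_mem_map (Filter.inter_mem_inf hU (Filter.mem_principal_self Y))
    obtain ⟨nn, hnn⟩ := hT _ hFφ
    set F : Set ℕ := c '' (U ∩ Y) with hFdef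
    set Hs : Finset ℕ := (T nn).filter (fun b => b ∈ F) with hHsdef
    have hHscoe : (F ∩ ((T nn) : Set ℕ)) = (Hs : Set ℕ) := by
      ext b
      simp [hHsdef, and_comm]
    have hHcard : (nn+3)^(nn+3) ≤ Hs.card := by
      rw [hHscoe, Set.ncard_coe_finset] at hnn
      exact hnn
    -- representatives
    have hrep : ∀ b : ℕ, ∃ y : G, b ∈ Hs → (y ∈ U ∧ y ∈ Y ∧ c y = b) := by
      intro b
      by_cases hb : b ∈ Hs
      · have hbF : b ∈ F := (Finset.mem_filter.mp hb).2
        obtain ⟨y, hy, hcy⟩ := hbF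
        exact ⟨y, fun _ => ⟨hy.1, hy.2, hcy⟩⟩
      · exact ⟨1, fun hmem => absurd hmem hb⟩
    choose yb hyb using hrep
    have hybY : ∀ b ∈ Hs, yb b ∈ Yp b := by
      intro b hb
      have h3 := (hyb b hb).2.2
      have h2 := hcY _ (hyb b hb).2.1
      rwa [h3] at h2
    by_cases htrap : ∃ b ∈ Hs, ∃ b' ∈ Hs, b ≠ b' ∧ (yb b)⁻¹ * yb b' ∉ D nn
    · obtain ⟨b, hb, b', hb', hne, hD⟩ := htrap
      refine ⟨(yb b)⁻¹ * yb b', ?_, yb b, (hyb b hb).1, yb b', (hyb b' hb').1, rfl⟩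
      apply Set.mem_iUnion.mpr
      exact ⟨nn, ⟨b, (Finset.mem_filter.mp hb).1, b', (Finset.mem_filter.mp hb').1, hne,
        yb b, hybY b hb, yb b', hybY b' hb', rfl⟩, hD⟩
    · push_neg at htrap
      exfalso
      -- every cross-pair is trapped in D nn: run the descent
      have htrap' : ∀ b ∈ Hs, ∀ b' ∈ Hs, b ≠ b' → ∃ t ≤ nn, (yb b)⁻¹ * yb b' ∈ K t := by
        intro b hb b' hb' hne
        have := htrap b hb b' hb' hne
        simp only [hDdef, Set.mem_iUnion] at this
        obtain ⟨t, ht, hmem⟩ := this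
        exact ⟨t, ht, hmem⟩
      have descent : ∀ d : ℕ, ∀ (S : Finset ℕ) (τ : ℕ), S ⊆ Hs → τ ≤ nn → nn ≤ τ + d →
          (∀ b ∈ S, ∀ b' ∈ S, b ≠ b' → (yb b)⁻¹ * yb b' ∈ N τ) →
          (nn+3)^(d+1) ≤ S.card → False := by
        intro d
        induction d with
        | zero =>
            intro S τ hSH hτ hnτ hpair hcard
            have h3 : nn + 3 ≤ S.card := by simpa using hcard
            have h2 : 1 < S.card := by omega
            obtain ⟨a, ha, b, hb, hab⟩ := Finset.one_lt_card.mp h2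
            obtain ⟨t, htn, htK⟩ := htrap' a (hSH ha) b (hSH hb) hab
            have hinN : (yb a)⁻¹ * yb b ∈ N τ := hpair a ha b hb hab
            exact Set.eq_empty_iff_forall_notMem.mp (hKN t τ (by omega)) _ ⟨htK, hinN⟩
        | succ d ih =>
            intro S τ hSH hτ hnτ hpair hcard
            have h2 : 1 < S.card := by
              have h3 : 2 ≤ (nn+3)^(d+1+1) := by
                calc 2 ≤ nn + 3 := by omega
                _ = (nn+3)^1 := (pow_one _).symm
                _ ≤ (nn+3)^(d+1+1) := Nat.pow_le_pow_right (by omega) (by omega)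
              omega
            by_cases hτnn : τ = nn
            · obtain ⟨a, ha, b, hb, hab⟩ := Finset.one_lt_card.mp h2
              obtain ⟨t, htn, htK⟩ := htrap' a (hSH ha) b (hSH hb) hab
              have hinN : (yb a)⁻¹ * yb b ∈ N τ := hpair a ha b hb hab
              exact Set.eq_empty_iff_forall_notMem.mp (hKN t τ (by omega)) _ ⟨htK, hinN⟩
            · have hτlt : τ < nn := lt_of_le_of_ne hτ hτnn
              have hSne : S.Nonempty := Finset.card_pos.mp (by omega)
              obtain ⟨a, ha⟩ := hSne
              -- each other element maps into a trap level in (τ, nn]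
              have hmap : ∀ b ∈ S.erase a, ∃ t, t ∈ Finset.Ioc τ nn ∧ (yb a)⁻¹ * yb b ∈ K t := by
                intro b hb
                have hbS : b ∈ S := Finset.mem_of_mem_erase hb
                have hba : b ≠ a := Finset.ne_of_mem_erase hb
                obtain ⟨t, htn, htK⟩ := htrap' a (hSH ha) b (hSH hbS) (Ne.symm hba)
                refine ⟨t, Finset.mem_Ioc.mpr ⟨?_, htn⟩, htK⟩
                by_contra htτ
                push_neg at htτ
                have hinN : (yb a)⁻¹ * yb b ∈ N τ := hpair a ha b hbS (Ne.symm hba)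
                exact Set.eq_empty_iff_forall_notMem.mp (hKN t τ htτ) _ ⟨htK, hinN⟩
              set tfun : ℕ → ℕ := fun b => if hb : b ∈ S.erase a then (hmap b hb).choose else τ + 1
                with htfundef
              have htfun : ∀ b ∈ S.erase a, tfun b ∈ Finset.Ioc τ nn ∧ (yb a)⁻¹ * yb b ∈ K (tfun b) := by
                intro b hb
                simp only [htfundef, dif_pos hb]
                exact (hmap b hb).choose_spec
              have hmapsto : ∀ b ∈ S.erase a, tfun b ∈ Finset.Ioc τ nn := fun b hb => (htfun b hb).1
              have hIocne : (Finset.Ioc τ nn).Nonempty := ⟨nn, Finset.mem_Ioc.mpr ⟨hτlt, le_rfl⟩⟩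
              have hcount : (Finset.Ioc τ nn).card * (nn+3)^(d+1) ≤ (S.erase a).card := by
                rw [Finset.card_erase_of_mem ha, Nat.card_Ioc]
                have h6 : 1 ≤ (nn+3)^(d+1) := Nat.one_le_pow _ _ (by omega)
                have h4 : (nn - τ) * (nn+3)^(d+1) ≤ nn * (nn+3)^(d+1) :=
                  Nat.mul_le_mul_right _ (by omega)
                have h7 : nn * (nn+3)^(d+1) + 1 ≤ (nn+3) * (nn+3)^(d+1) := by
                  calc nn * (nn+3)^(d+1) + 1 ≤ nn * (nn+3)^(d+1) + 3 * (nn+3)^(d+1) := by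
                        have h8 : 1 ≤ 3 * (nn+3)^(d+1) := by nlinarith
                        exact Nat.add_le_add_left h8 _
                    _ = (nn+3) * (nn+3)^(d+1) := by ring
                have h5 : (nn+3) * (nn+3)^(d+1) = (nn+3)^(d+2) := by ring
                have hfin1 : (nn - τ) * (nn+3)^(d+1) + 1 ≤ S.card := by
                  calc (nn - τ) * (nn+3)^(d+1) + 1 ≤ nn * (nn+3)^(d+1) + 1 :=
                        Nat.add_le_add_right h4 1
                    _ ≤ (nn+3)^(d+2) := by rw [← h5]; exact h7
                    _ ≤ S.card := hcard
                exact Nat.le_sub_one_of_lt (Nat.lt_of_succ_le hfin1)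
              obtain ⟨τ', hτ'mem, hfib⟩ :=
                Finset.exists_le_card_fiber_of_mul_le_card_of_maps_to hmapsto hIocne hcount
              set S' : Finset ℕ := (S.erase a).filter (fun b => tfun b = τ') with hS'def
              have hS'sub : S' ⊆ Hs := by
                intro b hb
                exact hSH (Finset.mem_of_mem_erase (Finset.mem_filter.mp hb).1)
              have hτ'le : τ' ≤ nn := (Finset.mem_Ioc.mp hτ'mem).2
              have hτ'gt : τ < τ' := (Finset.mem_Ioc.mp hτ'mem).1
              apply ih S' τ' hS'sub hτ'le (by omega) ?_ hfib
              intro b hb b' hb' hne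
              have hbE : b ∈ S.erase a := (Finset.mem_filter.mp hb).1
              have hb'E : b' ∈ S.erase a := (Finset.mem_filter.mp hb').1
              have h1 : (yb a)⁻¹ * yb b ∈ K τ' := by
                have := (htfun b hbE).2
                rwa [(Finset.mem_filter.mp hb).2] at this
              have h2 : (yb a)⁻¹ * yb b' ∈ K τ' := by
                have := (htfun b' hb'E).2
                rwa [(Finset.mem_filter.mp hb').2] at this
              have hgr : (yb b)⁻¹ * yb b' = ((yb a)⁻¹ * yb b)⁻¹ * ((yb a)⁻¹ * yb b') := by
                group
              rw [hgr]
              exact hKprod τ' _ h1 _ h2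
      -- initial pigeonhole to enter the descent
      have hHne : Hs.Nonempty := by
        apply Finset.card_pos.mp
        have : 1 ≤ (nn+3)^(nn+3) := Nat.one_le_pow _ _ (by omega)
        omega
      obtain ⟨a₀, ha₀⟩ := hHne
      have hmap0 : ∀ b ∈ Hs.erase a₀, ∃ t, t ∈ Finset.Iic nn ∧ (yb a₀)⁻¹ * yb b ∈ K t := by
        intro b hb
        have hbS : b ∈ Hs := Finset.mem_of_mem_erase hb
        have hba : b ≠ a₀ := Finset.ne_of_mem_erase hb
        obtain ⟨t, htn, htK⟩ := htrap' a₀ ha₀ b hbS (Ne.symm hba)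
        exact ⟨t, Finset.mem_Iic.mpr htn, htK⟩
      set tfun0 : ℕ → ℕ := fun b => if hb : b ∈ Hs.erase a₀ then (hmap0 b hb).choose else 0
        with htfun0def
      have htfun0 : ∀ b ∈ Hs.erase a₀, tfun0 b ∈ Finset.Iic nn ∧ (yb a₀)⁻¹ * yb b ∈ K (tfun0 b) := by
        intro b hb
        simp only [htfun0def, dif_pos hb]
        exact (hmap0 b hb).choose_spec
      have hmapsto0 : ∀ b ∈ Hs.erase a₀, tfun0 b ∈ Finset.Iic nn := fun b hb => (htfun0 b hb).1
      have hIicne : (Finset.Iic nn).Nonempty := ⟨0, Finset.mem_Iic.mpr (by omega)⟩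
      have hcount0 : (Finset.Iic nn).card * (nn+3)^(nn+1) ≤ (Hs.erase a₀).card := by
        rw [Finset.card_erase_of_mem ha₀, Nat.card_Iic]
        have h6 : 1 ≤ (nn+3)^(nn+1) := Nat.one_le_pow _ _ (by omega)
        have hstep2 : (nn+1) * (nn+3)^(nn+1) + 1 ≤ (nn+2) * (nn+3)^(nn+1) := by
          calc (nn+1)*(nn+3)^(nn+1) + 1 ≤ (nn+1)*(nn+3)^(nn+1) + (nn+3)^(nn+1) :=
                Nat.add_le_add_left h6 _
            _ = (nn+2) * (nn+3)^(nn+1) := by ring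
        have hstep3 : (nn+2) * (nn+3)^(nn+1) ≤ (nn+3)^(nn+3) := by
          have heq : (nn+3)^(nn+3) = ((nn+3)*(nn+3)) * (nn+3)^(nn+1) := by ring
          rw [heq]
          exact Nat.mul_le_mul_right _ (by nlinarith)
        have hfin2 : (nn+1) * (nn+3)^(nn+1) + 1 ≤ Hs.card :=
          le_trans (le_trans hstep2 hstep3) hHcard
        exact Nat.le_sub_one_of_lt (Nat.lt_of_succ_le hfin2)
      obtain ⟨τ₁, hτ₁mem, hfib0⟩ :=
        Finset.exists_le_card_fiber_of_mul_le_card_of_maps_to hmapsto0 hIicne hcount0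
      set S₁ : Finset ℕ := (Hs.erase a₀).filter (fun b => tfun0 b = τ₁) with hS₁def
      have hS₁sub : S₁ ⊆ Hs := by
        intro b hb
        exact Finset.mem_of_mem_erase (Finset.mem_filter.mp hb).1
      have hτ₁le : τ₁ ≤ nn := Finset.mem_Iic.mp hτ₁mem
      apply descent nn S₁ τ₁ hS₁sub hτ₁le (by omega) ?_ hfib0
      intro b hb b' hb' hne
      have hbE : b ∈ Hs.erase a₀ := (Finset.mem_filter.mp hb).1
      have hb'E : b' ∈ Hs.erase a₀ := (Finset.mem_filter.mp hb').1
      have h1 : (yb a₀)⁻¹ * yb b ∈ K τ₁ := by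
        have := (htfun0 b hbE).2
        rwa [(Finset.mem_filter.mp hb).2] at this
      have h2 : (yb a₀)⁻¹ * yb b' ∈ K τ₁ := by
        have := (htfun0 b' hb'E).2
        rwa [(Finset.mem_filter.mp hb').2] at this
      have hgr : (yb b)⁻¹ * yb b' = ((yb a₀)⁻¹ * yb b)⁻¹ * ((yb a₀)⁻¹ * yb b') := by
        group
      rw [hgr]
      exact hKprod τ₁ _ h1 _ h2
  -- assemble
  refine ⟨ξ, ?_, ⟨?_, ?_, ?_⟩, ?_⟩
  · intro x hx
    exact hξne1 x hx
  · -- discrete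
    intro x hx
    obtain ⟨W, hWopen, hxW, hWsub⟩ := hloc x (hξne1 x hx)
    refine ⟨W, hWopen.mem_nhds hxW, ?_⟩
    apply Set.Subset.antisymm
    · exact hWsub
    · intro w hw
      rw [Set.mem_singleton_iff] at hw
      subst hw
      exact ⟨hxW, hx⟩
  · -- 1 is a limit point
    intro V hV
    obtain ⟨U, hU, hUp⟩ := exists_inv_mul_subset' hV
    obtain ⟨x, hxξ, a, haU, b, hbU, hxab⟩ := hΩ U hU
    refine ⟨x, ⟨hxξ, ?_⟩, ?_⟩
    · simp only [Set.mem_singleton_iff]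
      exact hξne1 x hxξ
    · rw [hxab]
      exact hUp a haU b hbU
  · -- no other limit points
    intro x hlim
    by_contra hx
    obtain ⟨W, hWopen, hxW, hWsub⟩ := hloc x hx
    obtain ⟨w, ⟨hwξ, hwx⟩, hwW⟩ := hlim W (hWopen.mem_nhds hxW)
    exact hwx (hWsub ⟨hwW, hwξ⟩)
  · -- ξ ⊆ union of quotient sets
    intro x hx
    obtain ⟨n, hn⟩ := Set.mem_iUnion.mp hx
    obtain ⟨⟨i, hi, j, hj, hij, y, hy, y', hy', rfl⟩, -⟩ := hn
    apply Set.mem_iUnion.mpr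
    refine ⟨i, Set.mem_iUnion.mpr ⟨j, Set.mem_iUnion.mpr ⟨hij, ?_⟩⟩⟩
    exact Set.mul_mem_mul (Set.inv_mem_inv.mpr hy) hy'
end

section
/- Let (G, τ) be a countably infinite Hausdorff topological group with identity e and topology τ, and let 𝓕 be a nonrapid free filter on G converging to e. Suppose that τ_m ⊆ τ is a metrizable group topology on G coarser than τ, and let (H_n)_{n∈ω} be a sequence of subgroups of finite index in G. Then there exists a set ξ ⊆ G \ {e} such that: (i) ξ is discrete and e is its only limit point, both in (G, τ) and in (G, τ_m); (ii) ξ ∩ F⁻¹F ≠ ∅ for every F ∈ 𝓕; (iii) ξ \ H_n is finite for each n ∈ ω. If, in addition, (G, τ_m) is totally bounded, then (iv) every τ_m-neighborhood of e contains all but finitely many elements of ξ. -/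
open Pointwise

open Topology Filter


private def mfun : ℕ → ℕ
  | 0 => 2
  | (t+1) => (t+1) * mfun t + 1

private lemma mfun_two_le : ∀ t, 2 ≤ mfun t
  | 0 => le_refl 2
  | (t+1) => by
      have h := mfun_two_le t
      have : mfun t ≤ (t+1) * mfun t := Nat.le_mul_of_pos_left _ (Nat.succ_pos t)
      simp only [mfun]; omega

private lemma mfun_mono : Monotone mfun := by
  apply monotone_nat_of_le_succ
  intro t
  have h := mfun_two_le t
  have : mfun t ≤ (t+1) * mfun t := Nat.le_mul_of_pos_left _ (Nat.succ_pos t)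
  simp only [mfun]; omega

private lemma blocker_lemma {G : Type*} [Group G] (B : ℕ → Set G) (n : ℕ)
    (hB : ∀ k, ∀ i ≤ k, ∀ u v w : G, u⁻¹ * v ∈ B k → u⁻¹ * w ∈ B k → v⁻¹ * w ∉ B i) :
    ∀ t s, s + t = n + 1 →
      ∀ A : Finset G, mfun t ≤ A.card →
      (∀ u ∈ A, ∀ v ∈ A, u ≠ v → ∀ k < s, u⁻¹ * v ∉ B k) →
      ∃ u ∈ A, ∃ v ∈ A, u ≠ v ∧ ∀ k ≤ n, u⁻¹ * v ∉ B k := by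
  intro t
  induction t using Nat.strong_induction_on with
  | _ t ih =>
    intro s hs A hcard hA
    match t, hs with
    | 0, hs =>
      have h2 : 1 < A.card := by have := hcard; simp only [mfun] at this; omega
      obtain ⟨u, hu, v, hv, huv⟩ := Finset.one_lt_card.mp h2
      exact ⟨u, hu, v, hv, huv, fun k hk => hA u hu v hv huv k (by omega)⟩
    | (t+1), hs =>
      have hApos : 0 < A.card := lt_of_lt_of_le (by have := mfun_two_le (t+1); omega) hcard
      obtain ⟨a₀, ha₀⟩ := Finset.card_pos.mp hApos
      by_cases hgood : ∃ a ∈ A, a ≠ a₀ ∧ ∀ k, s ≤ k → k ≤ n → a₀⁻¹ * a ∉ B k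
      · obtain ⟨a, ha, hne, hk⟩ := hgood
        refine ⟨a₀, ha₀, a, ha, fun h => hne h.symm, fun k hkn => ?_⟩
        by_cases hks : k < s
        · exact hA a₀ ha₀ a ha (fun h => hne h.symm) k hks
        · exact hk k (by omega) hkn
      · classical
        push_neg at hgood
        -- every a ∈ A.erase a₀ has some k ∈ [s, n] with a₀⁻¹ * a ∈ B k
        have hforall : ∀ a ∈ A.erase a₀, ∃ k, s ≤ k ∧ k ≤ n ∧ a₀⁻¹ * a ∈ B k := by
          intro a ha
          obtain ⟨hne, haA⟩ := Finset.mem_erase.mp ha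
          obtain ⟨k, hk1, hk2, hk3⟩ := hgood a haA hne
          exact ⟨k, hk1, hk2, hk3⟩
        choose κ hκ1 hκ2 hκ3 using hforall
        -- package κ as a total function for pigeonhole
        set κ' : G → ℕ := fun a => if h : a ∈ A.erase a₀ then κ a h else s with hκ'
        have hmaps : ∀ a ∈ A.erase a₀, κ' a ∈ Finset.Icc s n := by
          intro a ha
          simp only [hκ', dif_pos ha, Finset.mem_Icc]
          exact ⟨hκ1 a ha, hκ2 a ha⟩
        have hcard' : (Finset.Icc s n).card * mfun t ≤ (A.erase a₀).card := by
          have h1 : (Finset.Icc s n).card = t + 1 := by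
            rw [Nat.card_Icc]; omega
          have h2 : (A.erase a₀).card = A.card - 1 := Finset.card_erase_of_mem ha₀
          have h3 : (t+1) * mfun t + 1 ≤ A.card := by simpa [mfun] using hcard
          rw [h1, h2]; omega
        obtain ⟨k, hkIcc, hkfib⟩ :=
          Finset.exists_le_card_fiber_of_mul_le_card_of_maps_to hmaps
            ⟨s, Finset.mem_Icc.mpr ⟨le_refl s, by omega⟩⟩ hcard'
        rw [Finset.mem_Icc] at hkIcc
        set A' : Finset G := {x ∈ A.erase a₀ | κ' x = k} with hA'
        have hA'sub : A' ⊆ A := fun x hx =>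
          Finset.mem_of_mem_erase (Finset.mem_filter.mp hx).1
        have hA'B : ∀ a ∈ A', a₀⁻¹ * a ∈ B k := by
          intro a ha
          obtain ⟨ha1, ha2⟩ := Finset.mem_filter.mp ha
          have h := hκ3 a ha1
          have ha2' : κ a ha1 = k := by
            have : (if h : a ∈ A.erase a₀ then κ a h else s) = k := ha2
            rwa [dif_pos ha1] at this
          rwa [ha2'] at h
        have hdiff : ∀ u ∈ A', ∀ v ∈ A', u ≠ v → ∀ i < k + 1, u⁻¹ * v ∉ B i := by
          intro u hu v hv _ i hi
          exact hB k i (by omega) a₀ u v (hA'B u hu) (hA'B v hv)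
        have hrec := ih (n - k) (by omega) (k + 1) (by omega) A'
          (le_trans (mfun_mono (show n - k ≤ t by omega)) hkfib) hdiff
        obtain ⟨u, hu, v, hv, huv, hres⟩ := hrec
        exact ⟨u, hA'sub hu, v, hA'sub hv, huv, hres⟩

private lemma half_nhds {G : Type*} [Group G] [TopologicalSpace G] [IsTopologicalGroup G]
    {U : Set G} (hU : U ∈ 𝓝 (1 : G)) :
    ∃ O ∈ 𝓝 (1 : G), ∀ u ∈ O, ∀ v ∈ O, u⁻¹ * v ∈ U := by
  obtain ⟨W, hW, hWsub⟩ := exists_nhds_split_inv hU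
  refine ⟨W⁻¹, inv_mem_nhds_one G hW, fun u hu v hv => ?_⟩
  have := hWsub u⁻¹ (Set.mem_inv.mp hu) v⁻¹ (Set.mem_inv.mp hv)
  simpa [div_eq_mul_inv] using this


private lemma exists_good_set {G : Type*} [Group G] [Countable G]
    (τ' : TopologicalSpace G) (hg : @IsTopologicalGroup G τ' _)
    (h2 : @T2Space G τ')
    (hfc : @FirstCountableTopology G τ')
    (𝓕 : Filter G) (hnr : NonrapidFilter 𝓕)
    (K : ℕ → Subgroup G) (hKfin : ∀ n, (K n).FiniteIndex)
    (hKanti : ∀ m n, m ≤ n → K n ≤ K m) :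
    ∃ ξ : Set G,
      ξ ⊆ {(1 : G)}ᶜ ∧
      (∀ x : G, x ≠ 1 → ∃ N ∈ @nhds G τ' x, (ξ ∩ N).Finite) ∧
      (∀ F ∈ 𝓕, ∃ x ∈ ξ, x ∈ F⁻¹ * F) ∧
      (∀ n, (ξ \ (K n : Set G)).Finite) ∧
      ((∀ V ∈ @nhds G τ' 1, ∃ T : Finset G, (T : Set G) * V = Set.univ) →
        ∀ V ∈ @nhds G τ' 1, (ξ \ V).Finite) := by
  letI := τ'
  haveI := hg
  haveI := h2
  haveI := hfc
  classical
  -- enumeration of G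
  obtain ⟨g, hgsurj⟩ := exists_surjective_nat G
  -- antitone basis of 𝓝 1
  obtain ⟨Vb, hVb⟩ := (𝓝 (1 : G)).exists_antitone_basis
  -- W n : "half" of Vb n
  have hWex : ∀ n : ℕ, ∃ O ∈ 𝓝 (1 : G), ∀ u ∈ O, ∀ v ∈ O, u⁻¹ * v ∈ Vb n :=
    fun n => half_nhds (hVb.1.mem_of_mem trivial)
  choose W hW1 hW2 using hWex
  -- cells
  have cellex : ∀ n : ℕ, ∃ (S : Finset G) (c : G → G) (E : Set G),
      (∀ x, c x ∈ S ∧ (c x)⁻¹ * x ∈ E) ∧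
      ((∃ S' : Finset G, (S' : Set G) * W n = Set.univ) → E ⊆ W n) := by
    intro n
    by_cases h : ∃ S' : Finset G, (S' : Set G) * W n = Set.univ
    · obtain ⟨S', hS'⟩ := h
      have hx : ∀ x : G, ∃ s ∈ S', s⁻¹ * x ∈ W n := by
        intro x
        have hxx : x ∈ (S' : Set G) * W n := hS' ▸ Set.mem_univ x
        obtain ⟨s, hs, w, hw, rfl⟩ := hxx
        exact ⟨s, hs, by simpa using hw⟩
      choose c hc1 hc2 using hx
      exact ⟨S', c, W n, fun x => ⟨hc1 x, hc2 x⟩, fun _ => le_refl _⟩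
    · exact ⟨{1}, fun _ => 1, Set.univ,
        fun x => ⟨Finset.mem_singleton_self 1, Set.mem_univ _⟩, fun hh => absurd hh h⟩
  choose S c E hcell hE using cellex
  -- protections
  have protex : ∀ k : ℕ, ∃ (Ak A'k : Set G), A'k ∈ 𝓝 (1 : G) ∧ Ak ∩ A'k = ∅ ∧
      (g k ≠ 1 → Ak ∈ 𝓝 (g k)) := by
    intro k
    by_cases h : g k = 1
    · exact ⟨∅, Set.univ, Filter.univ_mem, by simp, fun h' => absurd h h'⟩
    · obtain ⟨u, v, hu, hv, hxu, hxv, huv⟩ := t2_separation h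
      exact ⟨u, v, hv.mem_nhds hxv, Set.disjoint_iff_inter_eq_empty.mp huv,
        fun _ => hu.mem_nhds hxu⟩
  choose Ak A'k hA'nhds hAdisj hAnhds using protex
  have Oex : ∀ k : ℕ, ∃ O : Set G, O ∈ 𝓝 (1 : G) ∧
      (∀ i ≤ k, ∀ u ∈ O, ∀ v ∈ O, u⁻¹ * v ∈ A'k i) ∧
      (g k ≠ 1 → ∀ y ∈ O, g k * y ∈ Ak k) := by
    intro k
    have hInter : (⋂ i ∈ Finset.range (k+1), A'k i) ∈ 𝓝 (1 : G) :=
      (Filter.biInter_finset_mem _).mpr fun i _ => hA'nhds i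
    obtain ⟨O₁, hO₁, hO₁sub⟩ := half_nhds hInter
    by_cases h : g k = 1
    · refine ⟨O₁, hO₁, fun i hi u hu v hv => ?_, fun h' => absurd h h'⟩
      have := hO₁sub u hu v hv
      simp only [Set.mem_iInter] at this
      exact this i (Finset.mem_range.mpr (by omega))
    · have hpre : (fun y => g k * y) ⁻¹' (Ak k) ∈ 𝓝 (1 : G) := by
        have hc : ContinuousAt (fun y => g k * y) (1 : G) :=
          (continuous_const.mul continuous_id).continuousAt
        apply hc.preimage_mem_nhds
        simpa using hAnhds k h
      refine ⟨O₁ ∩ (fun y => g k * y) ⁻¹' (Ak k), Filter.inter_mem hO₁ hpre,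
        fun i hi u hu v hv => ?_, fun _ y hy => hy.2⟩
      have := hO₁sub u hu.1 v hv.1
      simp only [Set.mem_iInter] at this
      exact this i (Finset.mem_range.mpr (by omega))
  choose O hOnhds hOsub hOAk using Oex
  set B : ℕ → Set G := fun k => if g k = 1 then (∅ : Set G) else (g k) • O k with hBdef
  have hBnhds : ∀ k, g k ≠ 1 → B k ∈ 𝓝 (g k) := by
    intro k hk
    have : (g k) • O k ∈ 𝓝 ((g k) • (1 : G)) := smul_mem_nhds_smul (g k) (hOnhds k)
    simpa [hBdef, if_neg hk] using this
  have hBsub : ∀ k, B k ⊆ Ak k := by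
    intro k x hx
    by_cases hk : g k = 1
    · simp [hBdef, if_pos hk] at hx
    · simp only [hBdef, if_neg hk] at hx
      obtain ⟨y, hy, rfl⟩ := hx
      exact hOAk k hk y hy
  have hBkey : ∀ k, ∀ i ≤ k, ∀ u v w : G, u⁻¹ * v ∈ B k → u⁻¹ * w ∈ B k →
      v⁻¹ * w ∉ B i := by
    intro k i hik u v w h1 h2 hbad
    by_cases hk : g k = 1
    · simp [hBdef, if_pos hk] at h1
    · simp only [hBdef, if_neg hk] at h1 h2
      obtain ⟨p, hp, hpe⟩ := h1
      obtain ⟨q, hq, hqe⟩ := h2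
      have hvw : v⁻¹ * w = p⁻¹ * q := by
        have e1 : g k * p = u⁻¹ * v := by simpa using hpe
        have e2 : g k * q = u⁻¹ * w := by simpa using hqe
        have : (g k * p)⁻¹ * (g k * q) = (u⁻¹ * v)⁻¹ * (u⁻¹ * w) := by rw [e1, e2]
        simpa [mul_assoc] using this.symm
      have hmem : v⁻¹ * w ∈ A'k i := hvw ▸ hOsub k i hik p hp q hq
      have hmem2 : v⁻¹ * w ∈ Ak i := hBsub i hbad
      have := hAdisj i
      have : v⁻¹ * w ∈ Ak i ∩ A'k i := ⟨hmem2, hmem⟩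
      simp [hAdisj i] at this
  -- nonrapidity
  set f : ℕ → ℕ := fun n => Nat.card (G ⧸ K n) * (S n).card * mfun (n+1) with hfdef
  obtain ⟨T, hT⟩ := hnr f
  -- the sets C n and ξ
  set C : ℕ → Set G := fun n =>
    {x | x ∈ ((T n : Set G)⁻¹ * (T n : Set G)) ∧ x ∈ (K n : Set G) ∧
      x ∈ (E n)⁻¹ * (E n) ∧ x ≠ 1 ∧ ∀ k ≤ n, x ∉ B k} with hCdef
  set ξ : Set G := ⋃ n, C n with hξdef
  have hCfin : ∀ n, (C n).Finite := by
    intro n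
    apply Set.Finite.subset (((T n).finite_toSet.inv).mul (T n).finite_toSet)
    exact fun x hx => hx.1
  have hξsub : ξ ⊆ {(1 : G)}ᶜ := by
    intro x hx
    obtain ⟨n, hn⟩ := Set.mem_iUnion.mp hx
    exact hn.2.2.2.1
  refine ⟨ξ, hξsub, ?_, ?_, ?_, ?_⟩
  · -- protections
    intro x hx1
    obtain ⟨k, rfl⟩ := hgsurj x
    refine ⟨B k, hBnhds k hx1, ?_⟩
    apply Set.Finite.subset (Set.Finite.biUnion (Set.finite_Iio k) (fun n _ => hCfin n))
    rintro y ⟨hy1, hy2⟩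
    obtain ⟨n, hn⟩ := Set.mem_iUnion.mp hy1
    by_cases hnk : k ≤ n
    · exact absurd hy2 (hn.2.2.2.2 k hnk)
    · exact Set.mem_biUnion (by simpa using Nat.lt_of_not_le hnk) hn
  · -- hitting
    intro F hF
    obtain ⟨n, hn⟩ := hT F hF
    haveI := hKfin n
    haveI : Finite (G ⧸ K n) := Subgroup.finite_quotient_of_finiteIndex
    haveI : Fintype (G ⧸ K n) := Fintype.ofFinite _
    set A₀ : Finset G := (T n).filter (· ∈ F) with hA₀def
    have hA₀card : f n ≤ A₀.card := by
      have he : (F ∩ (T n : Set G)) = (A₀ : Set G) := by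
        ext y; simp [hA₀def, and_comm]
      rw [he, Set.ncard_coe_finset] at hn
      exact hn
    set φ : G → (G ⧸ K n) × G := fun a => ((a : G ⧸ K n), c n a) with hφdef
    set tf : Finset ((G ⧸ K n) × G) := Finset.univ ×ˢ S n with htfdef
    have hmaps : ∀ a ∈ A₀, φ a ∈ tf :=
      fun a _ => Finset.mem_product.mpr ⟨Finset.mem_univ _, (hcell n a).1⟩
    have htfne : tf.Nonempty :=
      ⟨φ 1, Finset.mem_product.mpr ⟨Finset.mem_univ _, (hcell n 1).1⟩⟩
    have htfcard : tf.card * mfun (n+1) ≤ A₀.card := by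
      have h1 : tf.card = Fintype.card (G ⧸ K n) * (S n).card := by
        simp [htfdef, Finset.card_product]
      have h2 : Nat.card (G ⧸ K n) = Fintype.card (G ⧸ K n) := Nat.card_eq_fintype_card
      calc tf.card * mfun (n+1)
          = Nat.card (G ⧸ K n) * (S n).card * mfun (n+1) := by rw [h1, h2]
        _ ≤ A₀.card := hA₀card
    obtain ⟨y, hy, hfib⟩ :=
      Finset.exists_le_card_fiber_of_mul_le_card_of_maps_to hmaps htfne htfcard
    set A' : Finset G := A₀.filter (fun a => φ a = y) with hA'def
    have hA'F : ∀ a ∈ A', a ∈ F ∧ a ∈ (T n : Set G) := by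
      intro a ha
      have h1 := Finset.mem_filter.mp (Finset.mem_filter.mp ha).1
      exact ⟨h1.2, h1.1⟩
    have hsame : ∀ u ∈ A', ∀ v ∈ A', u⁻¹ * v ∈ (K n : Set G) ∧
        u⁻¹ * v ∈ (E n)⁻¹ * E n := by
      intro u hu v hv
      have hu' := (Finset.mem_filter.mp hu).2
      have hv' := (Finset.mem_filter.mp hv).2
      have hq : (u : G ⧸ K n) = (v : G ⧸ K n) := by
        have := hu'.trans hv'.symm
        exact (Prod.ext_iff.mp this).1
      have hcc : c n u = c n v := by
        have := hu'.trans hv'.symm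
        exact (Prod.ext_iff.mp this).2
      constructor
      · exact QuotientGroup.eq.mp hq
      · have h1 : (c n u)⁻¹ * u ∈ E n := (hcell n u).2
        have h2 : (c n v)⁻¹ * v ∈ E n := (hcell n v).2
        have : u⁻¹ * v = ((c n u)⁻¹ * u)⁻¹ * ((c n v)⁻¹ * v) := by
          rw [hcc]; group
        rw [this]
        exact Set.mul_mem_mul (Set.inv_mem_inv.mpr h1) h2
    obtain ⟨u, hu, v, hv, huv, hres⟩ :=
      blocker_lemma B n hBkey (n+1) 0 (by omega) A' hfib
        (fun u _ v _ _ k hk => absurd hk (Nat.not_lt_zero k))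
    refine ⟨u⁻¹ * v, ?_, ?_⟩
    · apply Set.mem_iUnion.mpr ⟨n, ?_⟩
      refine ⟨?_, (hsame u hu v hv).1, (hsame u hu v hv).2, ?_, hres⟩
      · exact Set.mul_mem_mul (Set.inv_mem_inv.mpr (hA'F u hu).2) (hA'F v hv).2
      · intro h; exact huv (inv_mul_eq_one.mp h)
    · exact Set.mul_mem_mul (Set.inv_mem_inv.mpr (hA'F u hu).1) (hA'F v hv).1
  · -- K n cofiniteness
    intro n
    apply Set.Finite.subset (Set.Finite.biUnion (Set.finite_Iio n) (fun i _ => hCfin i))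
    rintro y ⟨hy1, hy2⟩
    obtain ⟨i, hi⟩ := Set.mem_iUnion.mp hy1
    by_cases hni : n ≤ i
    · exact absurd (hKanti n i hni hi.2.1) hy2
    · exact Set.mem_biUnion (by simpa using Nat.lt_of_not_le hni) hi
  · -- total boundedness
    intro hTB V hV
    obtain ⟨k₀, -, hk₀⟩ := hVb.1.mem_iff.mp hV
    apply Set.Finite.subset (Set.Finite.biUnion (Set.finite_Iio k₀) (fun i _ => hCfin i))
    rintro y ⟨hy1, hy2⟩
    obtain ⟨i, hi⟩ := Set.mem_iUnion.mp hy1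
    by_cases hik : k₀ ≤ i
    · exfalso
      apply hy2
      have hEW : E i ⊆ W i := hE i (hTB (W i) (hW1 i))
      obtain ⟨p, hp, q, hq, rfl⟩ := hi.2.2.1
      have hp' : p⁻¹ ∈ E i := Set.mem_inv.mp hp
      have : (p⁻¹)⁻¹ * q ∈ Vb i := hW2 i p⁻¹ (hEW hp') q (hEW hq)
      have h2 : p * q ∈ Vb i := by simpa using this
      exact hk₀ (hVb.2 hik h2)
    · exact Set.mem_biUnion (by simpa using Nat.lt_of_not_le hik) hi

theorem stmt_11 {G : Type*} [Group G] [Countable G] [Infinite G]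
    (τ τm : TopologicalSpace G)
    (hτg : @IsTopologicalGroup G τ _) (hτ2 : @T2Space G τ)
    -- `τ ≤ τm` in Mathlib's order means `τm` is coarser than `τ`
    (hcoarser : τ ≤ τm)
    (hτmg : @IsTopologicalGroup G τm _) (hmetr : @TopologicalSpace.MetrizableSpace G τm)
    (𝓕 : Filter G) (hfree : IsFreeFilter 𝓕) (hnr : NonrapidFilter 𝓕)
    (hconv : 𝓕 ≤ @nhds G τ 1)
    (H : ℕ → Subgroup G) (hH : ∀ n, (H n).FiniteIndex) :
    ∃ ξ : Set G, ξ ⊆ {(1 : G)}ᶜ ∧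
      (@IsDiscreteSubset G τ ξ ∧ @IsLimitPoint G τ 1 ξ ∧
        ∀ x, @IsLimitPoint G τ x ξ → x = 1) ∧
      (@IsDiscreteSubset G τm ξ ∧ @IsLimitPoint G τm 1 ξ ∧
        ∀ x, @IsLimitPoint G τm x ξ → x = 1) ∧
      (∀ F ∈ 𝓕, (ξ ∩ (F⁻¹ * F)).Nonempty) ∧
      (∀ n, (ξ \ (H n : Set G)).Finite) ∧
      ((∀ V ∈ @nhds G τm 1, ∃ T : Finset G, (T : Set G) * V = Set.univ) →
        ∀ V ∈ @nhds G τm 1, (ξ \ V).Finite) := by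
  classical
  have h2m : @T2Space G τm := by
    letI := τm; haveI := hmetr; exact inferInstance
  have hfcm : @FirstCountableTopology G τm := by
    letI := τm; haveI := hmetr; exact inferInstance
  -- the chain of finite-index subgroups
  let Kc : ℕ → Subgroup G := fun n => Nat.rec (H 0) (fun k Kk => Kk ⊓ H (k+1)) n
  have hKcfin : ∀ n, (Kc n).FiniteIndex := by
    intro n; induction n with
    | zero => exact hH 0
    | succ k ih =>
      show (Kc k ⊓ H (k+1)).FiniteIndex
      exact ⟨Subgroup.index_inf_ne_zero ih.index_ne_zero (hH (k+1)).index_ne_zero⟩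
  have hKcanti : ∀ m n, m ≤ n → Kc n ≤ Kc m := by
    intro m n h
    induction h with
    | refl => exact le_refl _
    | step h ih => exact le_trans inf_le_left ih
  have hKcH : ∀ n, Kc n ≤ H n := by
    intro n; cases n with
    | zero => exact le_refl _
    | succ k => exact inf_le_right
  obtain ⟨ξ, hξ1, hξ2, hξ3, hξ4, hξ5⟩ :=
    exists_good_set τm hτmg h2m hfcm 𝓕 hnr Kc hKcfin hKcanti
  have hmono : ∀ (x : G) (N : Set G), N ∈ @nhds G τm x → N ∈ @nhds G τ x :=
    fun x N hN => nhds_mono hcoarser hN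
  have core : ∀ (σ : TopologicalSpace G), @T1Space G σ →
      (∀ (x : G) (N : Set G), N ∈ @nhds G τm x → N ∈ @nhds G σ x) →
      (@IsDiscreteSubset G σ ξ ∧ ∀ x, @IsLimitPoint G σ x ξ → x = 1) := by
    intro σ hT1 hmono'
    letI := σ
    haveI := hT1
    have key : ∀ y : G, y ≠ 1 → ∃ U ∈ 𝓝 y, U ∩ ξ ⊆ {y} ∧ U ∈ 𝓝 y := by
      intro y hy1
      obtain ⟨N, hN, hNfin⟩ := hξ2 y hy1
      have hNy : N ∈ 𝓝 y := hmono' y N hN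
      have hfin : ((ξ ∩ N) \ {y}).Finite := hNfin.subset Set.diff_subset
      have hcl : IsClosed ((ξ ∩ N) \ {y}) := hfin.isClosed
      have hmem : ((ξ ∩ N) \ {y})ᶜ ∈ 𝓝 y :=
        hcl.isOpen_compl.mem_nhds (by simp)
      refine ⟨N ∩ ((ξ ∩ N) \ {y})ᶜ, Filter.inter_mem hNy hmem, ?_,
        Filter.inter_mem hNy hmem⟩
      rintro z ⟨⟨hzN, hzc⟩, hzξ⟩
      by_contra hzy
      exact hzc ⟨⟨hzξ, hzN⟩, hzy⟩
    constructor
    · intro y hyξ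
      have hy1 : y ≠ 1 := hξ1 hyξ
      obtain ⟨U, hU, hUsub, -⟩ := key y hy1
      refine ⟨U, hU, ?_⟩
      apply Set.eq_singleton_iff_unique_mem.mpr
      exact ⟨⟨mem_of_mem_nhds hU, hyξ⟩, fun z hz => hUsub ⟨hz.1, hz.2⟩⟩
    · intro x hx
      by_contra hx1
      obtain ⟨U, hU, hUsub, -⟩ := key x hx1
      obtain ⟨z, ⟨hzξ, hzx⟩, hzU⟩ := hx U hU
      exact hzx (hUsub ⟨hzU, hzξ⟩)
  have hT1τ : @T1Space G τ := by letI := τ; haveI := hτ2; exact inferInstance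
  have hT1τm : @T1Space G τm := by letI := τm; haveI := h2m; exact inferInstance
  have coreτ := core τ hT1τ hmono
  have coreτm := core τm hT1τm (fun _ _ h => h)
  have hconvm : 𝓕 ≤ @nhds G τm 1 := le_trans hconv (nhds_mono hcoarser)
  have lim1 : ∀ (σ : TopologicalSpace G), @IsTopologicalGroup G σ _ →
      𝓕 ≤ @nhds G σ 1 → @IsLimitPoint G σ 1 ξ := by
    intro σ hσg hσconv
    letI := σ
    haveI := hσg
    intro U hU
    obtain ⟨O, hO, hOsub⟩ := half_nhds hU
    obtain ⟨x, hxξ, hxFF⟩ := hξ3 O (hσconv hO)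
    obtain ⟨p, hp, q, hq, rfl⟩ := hxFF
    have hx1 : p * q ≠ 1 := hξ1 hxξ
    refine ⟨p * q, ⟨hxξ, hx1⟩, ?_⟩
    have := hOsub p⁻¹ (Set.mem_inv.mp hp) q hq
    simpa using this
  refine ⟨ξ, hξ1, ⟨coreτ.1, lim1 τ hτg hconv, coreτ.2⟩,
    ⟨coreτm.1, lim1 τm hτmg hconvm, coreτm.2⟩, ?_, ?_, hξ5⟩
  · intro F hF
    obtain ⟨x, h1, h2⟩ := hξ3 F hF
    exact ⟨x, h1, h2⟩
  · intro n
    apply Set.Finite.subset (hξ4 n)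
    intro y hy
    exact ⟨hy.1, fun hc => hy.2 (hKcH n hc)⟩
end

section
/- Let G be a countably infinite nondiscrete Hausdorff topological group with identity e such that the filter of neighborhoods of e is nonrapid, and let (H_n)_{n∈ω} be a sequence of subgroups of finite index in G. Then there exists a set ξ ⊆ G \ {e} such that: (i) ξ is discrete and e is its only limit point; and (ii) ξ \ H_n is finite for each n ∈ ω. -/
open Pointwise

namespace Stmt12Aux

/-- Size function for the descent argument. -/
def Mfun : ℕ → ℕ
  | 0 => 2
  | (k+1) => (k+1) * (Mfun k - 1) + 2

lemma two_le_Mfun (k : ℕ) : 2 ≤ Mfun k := by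
  cases k with
  | zero => simp [Mfun]
  | succ k => simp only [Mfun]; omega

/-- Intersections of initial segments of a sequence of subgroups. -/
def Kgrp {G : Type*} [Group G] (H : ℕ → Subgroup G) : ℕ → Subgroup G
  | 0 => H 0
  | (n+1) => Kgrp H n ⊓ H (n+1)

lemma Kgrp_finiteIndex {G : Type*} [Group G] (H : ℕ → Subgroup G)
    (hH : ∀ n, (H n).FiniteIndex) : ∀ n, (Kgrp H n).FiniteIndex
  | 0 => hH 0
  | (n+1) => by
      haveI := Kgrp_finiteIndex H hH n
      haveI := hH (n+1)
      show (Kgrp H n ⊓ H (n+1)).FiniteIndex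
      infer_instance

lemma Kgrp_le {G : Type*} [Group G] (H : ℕ → Subgroup G) :
    ∀ m n, m ≤ n → Kgrp H n ≤ H m := by
  intro m n
  induction n with
  | zero =>
    intro h
    have : m = 0 := by omega
    subst this
    exact le_of_eq rfl
  | succ n ih =>
    intro h
    by_cases hm : m = n + 1
    · subst hm; exact inf_le_right
    · exact le_trans inf_le_left (ih (by omega))

variable {G : Type*} [Group G] [TopologicalSpace G] [IsTopologicalGroup G]

omit [TopologicalSpace G] [IsTopologicalGroup G] in
lemma Mdummy : True := trivial

lemma sym_open_step [T1Space G] (S : Set G) (hS : IsOpen S) (h1 : (1:G) ∈ S) (g : G) :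
    ∃ D : Set G, IsOpen D ∧ (1:G) ∈ D ∧ D⁻¹ = D ∧ D ⊆ S ∧ D * D ⊆ S ∧
      (g ≠ 1 → g ∉ D * D * D) := by
  obtain ⟨V₁, hV₁o, hV₁1, hV₁⟩ := exists_open_nhds_one_mul_subset (hS.mem_nhds h1)
  have hV₁S : V₁ ⊆ S := fun v hv => hV₁ (by simpa using Set.mul_mem_mul hv hV₁1)
  by_cases hg : g = 1
  · refine ⟨V₁ ∩ V₁⁻¹, hV₁o.inter hV₁o.inv, ⟨hV₁1, by simpa using hV₁1⟩, ?_, ?_, ?_, ?_⟩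
    · rw [Set.inter_inv, inv_inv, Set.inter_comm]
    · exact fun x hx => hV₁S hx.1
    · exact (Set.mul_subset_mul Set.inter_subset_left Set.inter_subset_left).trans hV₁
    · exact fun h => absurd hg h
  · have h1g : (1:G) ∈ ({g}ᶜ : Set G) := by simpa using (Ne.symm hg)
    obtain ⟨W₁, hW₁o, hW₁1, hW₁⟩ :=
      exists_open_nhds_one_mul_subset (isOpen_compl_singleton.mem_nhds h1g)
    obtain ⟨W₂, hW₂o, hW₂1, hW₂⟩ := exists_open_nhds_one_mul_subset (hW₁o.mem_nhds hW₁1)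
    have hW₂W₁ : W₂ ⊆ W₁ := fun v hv => hW₂ (by simpa using Set.mul_mem_mul hv hW₂1)
    refine ⟨(V₁ ∩ W₂) ∩ (V₁ ∩ W₂)⁻¹, ?_, ?_, ?_, ?_, ?_, ?_⟩
    · exact ((hV₁o.inter hW₂o).inter (hV₁o.inter hW₂o).inv)
    · exact ⟨⟨hV₁1, hW₂1⟩, by simpa using (⟨hV₁1, hW₂1⟩ : (1:G) ∈ V₁ ∩ W₂)⟩
    · rw [Set.inter_inv, inv_inv, Set.inter_comm]
    · exact fun x hx => hV₁S hx.1.1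
    · refine (Set.mul_subset_mul ?_ ?_).trans hV₁ <;>
        exact fun x hx => hx.1.1
    · intro _ hmem
      have hsub : ((V₁ ∩ W₂) ∩ (V₁ ∩ W₂)⁻¹) ⊆ W₂ := fun x hx => hx.1.2
      have hg3 : g ∈ W₂ * W₂ * W₂ :=
        Set.mul_subset_mul (Set.mul_subset_mul hsub hsub) hsub hmem
      have : g ∈ ({g}ᶜ : Set G) :=
        ((Set.mul_subset_mul hW₂ hW₂W₁).trans hW₁) hg3
      simp at this

lemma exists_scale [T1Space G] (y : ℕ → G) :
    ∃ C : ℕ → Set G, C 0 = Set.univ ∧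
      (∀ n, IsOpen (C n) ∧ (1:G) ∈ C n ∧ (C n)⁻¹ = C n) ∧
      (∀ n, C (n+1) ⊆ C n ∧ C (n+1) * C (n+1) ⊆ C n ∧
        (y n ≠ 1 → y n ∉ C (n+1) * C (n+1) * C (n+1))) := by
  classical
  let Q : Set G → Prop := fun D => IsOpen D ∧ (1:G) ∈ D ∧ D⁻¹ = D
  have step : ∀ (p : {S : Set G // Q S}) (n : ℕ), ∃ q : {S : Set G // Q S},
      q.1 ⊆ p.1 ∧ q.1 * q.1 ⊆ p.1 ∧ (y n ≠ 1 → y n ∉ q.1 * q.1 * q.1) := by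
    rintro ⟨S, hSo, hS1, hSsym⟩ n
    obtain ⟨D, h1, h2, h3, h4, h5, h6⟩ := sym_open_step S hSo hS1 (y n)
    exact ⟨⟨D, h1, h2, h3⟩, h4, h5, h6⟩
  choose F hF1 hF2 hF3 using step
  let Cs : ℕ → {S : Set G // Q S} := fun n =>
    Nat.rec ⟨Set.univ, isOpen_univ, Set.mem_univ _, Set.inv_univ⟩ (fun n ih => F ih n) n
  refine ⟨fun n => (Cs n).1, rfl, fun n => (Cs n).2, fun n => ?_⟩
  exact ⟨hF1 (Cs n) n, hF2 (Cs n) n, hF3 (Cs n) n⟩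

lemma closure_sub_mul (A V : Set G) (hVo : IsOpen V) (h1 : (1:G) ∈ V) (hsym : V⁻¹ = V) :
    closure A ⊆ A * V := by
  intro x hx
  have hopen : IsOpen ((x * ·) '' V) := isOpenMap_mul_left x _ hVo
  have hxmem : x ∈ (x * ·) '' V := ⟨1, h1, mul_one x⟩
  obtain ⟨a, ⟨v, hv, hva⟩, haA⟩ := (mem_closure_iff.mp hx _ hopen hxmem)
  have hxa : x = a * v⁻¹ := by rw [← hva]; group
  rw [hxa]
  refine Set.mul_mem_mul haA ?_
  rw [← hsym]
  exact Set.inv_mem_inv.mpr hv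

lemma descent (Rk : G → ℕ) (O : G → Set G) (C : ℕ → Set G)
    (hCmono : ∀ s t : ℕ, s ≤ t → C t ⊆ C s)
    (hdisj : ∀ g, g ≠ 1 → ∀ z ∈ O g, z ∉ C (Rk g + 1) * C (Rk g + 1))
    (hquot : ∀ g, g ≠ 1 → ∀ a b, a ∈ O g → b ∈ O g →
      a⁻¹ * b ∈ C (Rk g + 1) * C (Rk g + 1)) :
    ∀ k (J A : Finset G), (∀ g ∈ J, g ≠ (1:G)) → J.card ≤ k → Mfun k ≤ A.card →
      (∀ a ∈ A, ∀ b ∈ A, a ≠ b → ∃ g ∈ J, a⁻¹ * b ∈ O g) → False := by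
  intro k
  induction k with
  | zero =>
    intro J A hJ1 hJcard hAcard hyp
    have hJ : J = ∅ := Finset.card_eq_zero.mp (Nat.le_zero.mp hJcard)
    have h2 : 1 < A.card := by have := hAcard; simp [Mfun] at this; omega
    obtain ⟨a, haA, b, hbA, hab⟩ := Finset.one_lt_card.mp h2
    obtain ⟨g, hgJ, -⟩ := hyp a haA b hbA hab
    simp [hJ] at hgJ
  | succ k IH =>
    intro J A hJ1 hJcard hAcard hyp
    classical
    have hA2 : 2 ≤ A.card := le_trans (two_le_Mfun _) hAcard
    have hAne : A.Nonempty := Finset.card_pos.mp (by omega)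
    obtain ⟨a₀, ha₀⟩ := hAne
    have hscard : (A.erase a₀).card = A.card - 1 := Finset.card_erase_of_mem ha₀
    have hmaps : ∀ a ∈ A.erase a₀, ∃ g ∈ J, a₀⁻¹ * a ∈ O g := by
      intro a ha
      exact hyp a₀ ha₀ a (Finset.mem_of_mem_erase ha) (Ne.symm (Finset.ne_of_mem_erase ha))
    have hJne : J.Nonempty := by
      rcases Finset.eq_empty_or_nonempty J with h | h
      · exfalso
        have hsne : (A.erase a₀).Nonempty := by
          refine Finset.card_pos.mp ?_
          have := two_le_Mfun (k+1); omega
        obtain ⟨a, ha⟩ := hsne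
        obtain ⟨g, hgJ, -⟩ := hmaps a ha
        simp [h] at hgJ
      · exact h
    obtain ⟨g₀, hg₀⟩ := hJne
    choose φ hφJ hφO using hmaps
    let φ' : G → G := fun a => if h : a ∈ A.erase a₀ then φ a h else g₀
    have hf : ∀ a ∈ A.erase a₀, φ' a ∈ J := by
      intro a ha; simp only [φ', dif_pos ha]; exact hφJ a ha
    have hn : J.card * (Mfun k - 1) < (A.erase a₀).card := by
      have h1 : J.card * (Mfun k - 1) ≤ (k+1) * (Mfun k - 1) :=
        Nat.mul_le_mul_right _ hJcard
      have h2 : Mfun (k+1) = (k+1) * (Mfun k - 1) + 2 := rfl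
      omega
    obtain ⟨i, hiJ, hfib⟩ := Finset.exists_lt_card_fiber_of_mul_lt_card_of_maps_to hf hn
    have hFcard : Mfun k ≤ ((A.erase a₀).filter (fun x => φ' x = i)).card := by
      have h2 := two_le_Mfun k
      have h3 : Mfun k - 1 < ((A.erase a₀).filter (fun x => φ' x = i)).card := hfib
      omega
    have hiO : ∀ a ∈ (A.erase a₀).filter (fun x => φ' x = i), a₀⁻¹ * a ∈ O i := by
      intro a ha
      rw [Finset.mem_filter] at ha
      obtain ⟨has, hai⟩ := ha
      have hmem := hφO a has
      simp only [φ', dif_pos has] at hai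
      rwa [hai] at hmem
    have hi1 : i ≠ 1 := hJ1 i hiJ
    have hJ'sub : J.filter (fun g => Rk i < Rk g) ⊆ J.erase i := by
      intro g hg
      rw [Finset.mem_filter] at hg
      refine Finset.mem_erase.mpr ⟨?_, hg.1⟩
      rintro rfl; exact lt_irrefl _ hg.2
    have hJ'card : (J.filter (fun g => Rk i < Rk g)).card ≤ k := by
      have h1 := Finset.card_le_card hJ'sub
      have h2 := Finset.card_erase_of_mem hiJ
      omega
    refine IH (J.filter (fun g => Rk i < Rk g)) ((A.erase a₀).filter (fun x => φ' x = i))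
      (fun g hg => hJ1 g (Finset.mem_of_mem_filter g hg)) hJ'card hFcard ?_
    intro a haF b hbF hab
    have haA : a ∈ A := Finset.mem_of_mem_erase (Finset.mem_of_mem_filter a haF)
    have hbA : b ∈ A := Finset.mem_of_mem_erase (Finset.mem_of_mem_filter b hbF)
    obtain ⟨g, hgJ, hgO⟩ := hyp a haA b hbA hab
    have hz : a⁻¹ * b ∈ C (Rk i + 1) * C (Rk i + 1) := by
      have h := hquot i hi1 (a₀⁻¹ * a) (a₀⁻¹ * b) (hiO a haF) (hiO b hbF)
      have heq : (a₀⁻¹ * a)⁻¹ * (a₀⁻¹ * b) = a⁻¹ * b := by group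
      rwa [heq] at h
    refine ⟨g, ?_, hgO⟩
    rw [Finset.mem_filter]
    refine ⟨hgJ, ?_⟩
    by_contra hle
    push_neg at hle
    have hsub2 : C (Rk i + 1) * C (Rk i + 1) ⊆ C (Rk g + 1) * C (Rk g + 1) := by
      have hCC := hCmono (Rk g + 1) (Rk i + 1) (by omega)
      exact Set.mul_subset_mul hCC hCC
    exact hdisj g (hJ1 g hgJ) _ hgO (hsub2 hz)

end Stmt12Aux

theorem stmt_12 {G : Type*} [Group G] [Countable G] [Infinite G]
    [TopologicalSpace G] [IsTopologicalGroup G] [T2Space G]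
    (hnd : ¬ DiscreteTopology G)
    (hnr : NonrapidFilter (nhds (1 : G)))
    (H : ℕ → Subgroup G) (hH : ∀ n, (H n).FiniteIndex) :
    ∃ ξ : Set G, ξ ⊆ {(1 : G)}ᶜ ∧
      (IsDiscreteSubset ξ ∧ IsLimitPoint 1 ξ ∧ ∀ x, IsLimitPoint x ξ → x = 1) ∧
      (∀ n, (ξ \ (H n : Set G)).Finite) := by
  classical
  obtain ⟨e⟩ : Nonempty (G ≃ ℕ) := nonempty_equiv_of_countable
  -- the subgroups K n = H 0 ⊓ ... ⊓ H n
  have hKfin := Stmt12Aux.Kgrp_finiteIndex H hH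
  have hKle := Stmt12Aux.Kgrp_le H
  set K : ℕ → Subgroup G := Stmt12Aux.Kgrp H with hK
  have hcne : ∀ n, (K n).index ≠ 0 := fun n => (hKfin n).index_ne_zero
  -- apply nonrapidity
  obtain ⟨T, hT⟩ := hnr (fun n => (K n).index * Stmt12Aux.Mfun n + 1)
  -- the scale
  obtain ⟨C, hC0, hCb, hCs⟩ := Stmt12Aux.exists_scale (G := G) (fun n => e.symm n)
  have hCo : ∀ n, IsOpen (C n) := fun n => (hCb n).1
  have hC1 : ∀ n, (1:G) ∈ C n := fun n => (hCb n).2.1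
  have hCsym : ∀ n, (C n)⁻¹ = C n := fun n => (hCb n).2.2
  have hCmono : ∀ s t : ℕ, s ≤ t → C t ⊆ C s := by
    intro s t
    induction t with
    | zero =>
      intro h
      have hs0 : s = 0 := by omega
      subst hs0; exact subset_rfl
    | succ t ih =>
      intro h
      by_cases hst : s = t + 1
      · subst hst; exact subset_rfl
      · exact ((hCs t).1).trans (ih (by omega))
  -- key avoidance property of the scale
  have havoidCl : ∀ g : G, g ≠ 1 →
      g ∉ closure (C (e g + 1 + 1) * C (e g + 1 + 1)) := by
    intro g hg hmem
    have h1 : closure (C (e g + 1 + 1) * C (e g + 1 + 1)) ⊆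
        (C (e g + 1 + 1) * C (e g + 1 + 1)) * C (e g + 1 + 1) :=
      Stmt12Aux.closure_sub_mul _ _ (hCo _) (hC1 _) (hCsym _)
    have hsub : C (e g + 1 + 1) ⊆ C (e g + 1) := (hCs (e g + 1)).1
    have h2 : g ∈ C (e g + 1) * C (e g + 1) * C (e g + 1) :=
      Set.mul_subset_mul (Set.mul_subset_mul hsub hsub) hsub (h1 hmem)
    have h3 := (hCs (e g)).2.2
    rw [e.symm_apply_apply] at h3
    exact h3 hg h2
  -- the sets B g
  have hBex : ∀ g : G, ∃ B : Set G, IsOpen B ∧ (1:G) ∈ B ∧ B⁻¹ = B ∧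
      B ⊆ C (e g + 1 + 1) ∧
      (g ≠ 1 → ((g * ·) '' B) ∩ (C (e g + 1 + 1) * C (e g + 1 + 1)) = ∅) := by
    intro g
    by_cases hg : g = 1
    · exact ⟨C (e g + 1 + 1), hCo _, hC1 _, hCsym _, subset_rfl, fun h => absurd hg h⟩
    · have hcl := havoidCl g hg
      set W : Set G := C (e g + 1 + 1) with hW
      have hQo : IsOpen ((g * ·) ⁻¹' (closure (W * W))ᶜ) :=
        (isClosed_closure.isOpen_compl).preimage (continuous_mul_left g)
      have hQ1 : (1:G) ∈ (g * ·) ⁻¹' (closure (W * W))ᶜ := by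
        simp only [Set.mem_preimage, mul_one]
        exact hcl
      refine ⟨(W ∩ (g * ·) ⁻¹' (closure (W * W))ᶜ) ∩
        (W ∩ (g * ·) ⁻¹' (closure (W * W))ᶜ)⁻¹, ?_, ?_, ?_, ?_, ?_⟩
      · exact ((hCo _).inter hQo).inter ((hCo _).inter hQo).inv
      · exact ⟨⟨hC1 _, hQ1⟩, by simpa using (⟨hC1 _, hQ1⟩ :
          (1:G) ∈ W ∩ (g * ·) ⁻¹' (closure (W * W))ᶜ)⟩
      · rw [Set.inter_inv, inv_inv, Set.inter_comm]
      · exact fun x hx => hx.1.1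
      · intro _
        rw [Set.eq_empty_iff_forall_notMem]
        rintro z ⟨⟨b, hb, rfl⟩, hzW⟩
        exact hb.1.2 (subset_closure hzW)
  choose B hBo hB1 hBsym hBsub hBdisj using hBex
  -- the sets O g and their properties
  have hOdisj : ∀ g : G, g ≠ 1 → ∀ z ∈ (g * ·) '' B g,
      z ∉ C (e g + 1 + 1) * C (e g + 1 + 1) := by
    intro g hg z hz hzC
    exact Set.eq_empty_iff_forall_notMem.mp (hBdisj g hg) z ⟨hz, hzC⟩
  have hOquot : ∀ g : G, g ≠ 1 → ∀ a b, a ∈ (g * ·) '' B g → b ∈ (g * ·) '' B g →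
      a⁻¹ * b ∈ C (e g + 1 + 1) * C (e g + 1 + 1) := by
    intro g hg a b ha hb
    obtain ⟨u, hu, rfl⟩ := ha
    obtain ⟨v, hv, rfl⟩ := hb
    have heq : (g * u)⁻¹ * (g * v) = u⁻¹ * v := by group
    rw [heq]
    refine Set.mul_mem_mul (hBsub g ?_) (hBsub g hv)
    rw [← hBsym g]
    exact Set.inv_mem_inv.mpr hu
  -- the index sets J n and the forbidden regions
  have hJmem : ∀ (n : ℕ) (g : G),
      g ∈ ((Finset.range n).image (fun m => e.symm m)).erase 1 ↔ (g ≠ 1 ∧ e g < n) := by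
    intro n g
    simp only [Finset.mem_erase, Finset.mem_image, Finset.mem_range]
    constructor
    · rintro ⟨hne, m, hm, rfl⟩
      exact ⟨hne, by simpa using hm⟩
    · rintro ⟨hne, hlt⟩
      exact ⟨hne, e g, hlt, e.symm_apply_apply g⟩
  have hJcard : ∀ n : ℕ, (((Finset.range n).image (fun m => e.symm m)).erase 1).card ≤ n :=
    fun n => le_trans (Finset.card_erase_le)
      (le_trans Finset.card_image_le (by simp))
  have hJ1 : ∀ n : ℕ, ∀ g ∈ ((Finset.range n).image (fun m => e.symm m)).erase 1,
      g ≠ (1:G) := fun n g hg => (Finset.mem_erase.mp hg).1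
  -- the set ξ
  set Om : ℕ → Set G := fun n =>
    ⋃ g ∈ ((Finset.range n).image (fun m => e.symm m)).erase 1, (g * ·) '' B g with hOm
  set Xi : ℕ → Set G := fun n =>
    {q : G | q ∈ (K n : Set G) ∧ q ∉ Om n ∧ q ≠ 1 ∧
      ∃ a ∈ (T n : Set G), ∃ b ∈ (T n : Set G), q = a⁻¹ * b} with hXi
  set xi : Set G := ⋃ n, Xi n with hxi
  have hXifin : ∀ n, (Xi n).Finite := by
    intro n
    have hsub : Xi n ⊆ Set.image2 (fun a b => a⁻¹ * b) (T n : Set G) (T n : Set G) := by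
      rintro q ⟨-, -, -, a, ha, b, hb, rfl⟩
      exact Set.mem_image2_of_mem ha hb
    exact (Set.Finite.image2 _ (T n).finite_toSet (T n).finite_toSet).subset hsub
  have hxicompl : xi ⊆ {(1:G)}ᶜ := by
    intro q hq
    obtain ⟨m, hm⟩ := Set.mem_iUnion.mp hq
    simpa using hm.2.2.1
  -- hitting: every neighborhood of 1 meets ξ
  have hhit : ∀ U ∈ nhds (1:G), ∃ q, q ∈ xi ∧ q ∈ U ∧ q ≠ 1 := by
    intro U hU
    obtain ⟨U', hU'sub, hU'o, hU'1⟩ := mem_nhds_iff.mp hU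
    obtain ⟨V₀, hV₀o, hV₀1, hV₀⟩ := exists_open_nhds_one_mul_subset (hU'o.mem_nhds hU'1)
    have hVmem : V₀ ∩ V₀⁻¹ ∈ nhds (1:G) := by
      refine (hV₀o.inter hV₀o.inv).mem_nhds ⟨hV₀1, ?_⟩
      simpa using hV₀1
    obtain ⟨n, hn⟩ := hT _ hVmem
    have hAset : (V₀ ∩ V₀⁻¹) ∩ (T n : Set G) =
        (((T n).filter (fun a => a ∈ V₀ ∩ V₀⁻¹)) : Finset G) := by
      ext a
      simp only [Set.mem_inter_iff, Finset.coe_filter, Set.mem_setOf_eq, Finset.mem_coe]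
      tauto
    rw [hAset, Set.ncard_coe_finset] at hn
    haveI : Finite (G ⧸ K n) := by
      haveI := hKfin n
      infer_instance
    haveI : Fintype (G ⧸ K n) := Fintype.ofFinite _
    have hcard_univ : (Finset.univ : Finset (G ⧸ K n)).card = (K n).index := by
      rw [Finset.card_univ, ← Nat.card_eq_fintype_card, Subgroup.index_eq_card]
    have hlt : (Finset.univ : Finset (G ⧸ K n)).card * (Stmt12Aux.Mfun n - 1) <
        ((T n).filter (fun a => a ∈ V₀ ∩ V₀⁻¹)).card := by
      rw [hcard_univ]
      have h1 : (K n).index * (Stmt12Aux.Mfun n - 1) ≤ (K n).index * Stmt12Aux.Mfun n :=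
        Nat.mul_le_mul_left _ (Nat.sub_le _ _)
      omega
    obtain ⟨yq, -, hfib⟩ := Finset.exists_lt_card_fiber_of_mul_lt_card_of_maps_to
      (f := fun a => (QuotientGroup.mk a : G ⧸ K n))
      (fun a _ => Finset.mem_univ _) hlt
    have hFcard : Stmt12Aux.Mfun n ≤
        (((T n).filter (fun a => a ∈ V₀ ∩ V₀⁻¹)).filter
          (fun x => (QuotientGroup.mk x : G ⧸ K n) = yq)).card := by
      have h2 := Stmt12Aux.two_le_Mfun n
      omega
    have hnot : ¬ (∀ a ∈ ((T n).filter (fun a => a ∈ V₀ ∩ V₀⁻¹)).filter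
          (fun x => (QuotientGroup.mk x : G ⧸ K n) = yq),
        ∀ b ∈ ((T n).filter (fun a => a ∈ V₀ ∩ V₀⁻¹)).filter
          (fun x => (QuotientGroup.mk x : G ⧸ K n) = yq),
        a ≠ b → ∃ g ∈ ((Finset.range n).image (fun m => e.symm m)).erase 1,
          a⁻¹ * b ∈ (g * ·) '' B g) := by
      intro hcon
      exact Stmt12Aux.descent (fun g => e g + 1) (fun g => (g * ·) '' B g) C hCmono
        hOdisj hOquot n _ _ (hJ1 n) (hJcard n) hFcard hcon
    push_neg at hnot
    obtain ⟨a, haF, b, hbF, hab, hq⟩ := hnot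
    have haf := Finset.mem_filter.mp haF
    have hbf := Finset.mem_filter.mp hbF
    have haf2 := Finset.mem_filter.mp haf.1
    have hbf2 := Finset.mem_filter.mp hbf.1
    refine ⟨a⁻¹ * b, ?_, ?_, ?_⟩
    · refine Set.mem_iUnion.mpr ⟨n, ?_⟩
      refine ⟨?_, ?_, ?_, a, haf2.1, b, hbf2.1, rfl⟩
      · have hmk : (QuotientGroup.mk a : G ⧸ K n) = QuotientGroup.mk b :=
          haf.2.trans hbf.2.symm
        exact QuotientGroup.eq.mp hmk
      · intro hmem
        simp only [hOm, Set.mem_iUnion] at hmem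
        obtain ⟨g, hgJ, hgO⟩ := hmem
        exact hq g hgJ hgO
      · simpa [inv_mul_eq_one] using hab
    · have haV : a ∈ V₀ ∩ V₀⁻¹ := haf2.2
      have hbV : b ∈ V₀ ∩ V₀⁻¹ := hbf2.2
      have hainv : a⁻¹ ∈ V₀ := Set.mem_inv.mp haV.2
      exact hU'sub (hV₀ (Set.mul_mem_mul hainv hbV.1))
    · simpa [inv_mul_eq_one] using hab
  -- avoidance: every point distinct from 1 has a neighborhood meeting ξ in at most itself
  have havd : ∀ x : G, x ≠ 1 → ∃ Ux, IsOpen Ux ∧ x ∈ Ux ∧ Ux ∩ xi ⊆ {x} := by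
    intro x hx
    have hOx : x ∈ (x * ·) '' B x := ⟨1, hB1 x, mul_one x⟩
    have hOxo : IsOpen ((x * ·) '' B x) := isOpenMap_mul_left x _ (hBo x)
    have hsub : ((x * ·) '' B x) ∩ xi ⊆ ⋃ m ∈ Finset.range (e x + 1), Xi m := by
      rintro z ⟨hzO, hzxi⟩
      obtain ⟨m, hm⟩ := Set.mem_iUnion.mp hzxi
      rcases lt_or_ge m (e x + 1) with h | h
      · exact Set.mem_biUnion (Finset.mem_range.mpr h) hm
      · exfalso
        apply hm.2.1
        have hxJ : x ∈ ((Finset.range m).image (fun k => e.symm k)).erase 1 :=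
          (hJmem m x).mpr ⟨hx, by omega⟩
        simp only [hOm, Set.mem_iUnion]
        exact ⟨x, hxJ, hzO⟩
    have hfinB : (⋃ m ∈ Finset.range (e x + 1), Xi m).Finite :=
      Set.Finite.biUnion (Finset.range (e x + 1)).finite_toSet (fun m _ => hXifin m)
    have hfin : (((x * ·) '' B x) ∩ xi).Finite := hfinB.subset hsub
    refine ⟨((x * ·) '' B x) \ ((((x * ·) '' B x) ∩ xi) \ {x}), ?_, ?_, ?_⟩
    · exact hOxo.sdiff ((hfin.subset Set.diff_subset).isClosed)
    · exact ⟨hOx, fun hmem => hmem.2 rfl⟩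
    · rintro z ⟨⟨hzO, hzbad⟩, hzxi⟩
      by_contra hzx
      exact hzbad ⟨⟨hzO, hzxi⟩, hzx⟩
  -- assemble
  refine ⟨xi, hxicompl, ⟨?_, ?_, ?_⟩, ?_⟩
  · -- discrete
    intro x hxxi
    have hx1 : x ≠ 1 := by simpa using hxicompl hxxi
    obtain ⟨Ux, hUo, hUx, hUsub⟩ := havd x hx1
    refine ⟨Ux, hUo.mem_nhds hUx, ?_⟩
    refine Set.Subset.antisymm hUsub ?_
    exact Set.singleton_subset_iff.mpr ⟨hUx, hxxi⟩
  · -- 1 is a limit point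
    intro U hU
    obtain ⟨q, hqxi, hqU, hq1⟩ := hhit U hU
    exact ⟨q, ⟨⟨hqxi, by simpa using hq1⟩, hqU⟩⟩
  · -- unique limit point
    intro x hlim
    by_contra hx1
    obtain ⟨Ux, hUo, hUx, hUsub⟩ := havd x hx1
    obtain ⟨z, ⟨⟨hzxi, hzx⟩, hzU⟩⟩ := hlim Ux (hUo.mem_nhds hUx)
    exact hzx (hUsub ⟨hzU, hzxi⟩)
  · -- ξ \ H n is finite
    intro n
    have hsub : xi \ (H n : Set G) ⊆ ⋃ m ∈ Finset.range n, Xi m := by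
      rintro z ⟨hz, hzH⟩
      obtain ⟨m, hm⟩ := Set.mem_iUnion.mp hz
      rcases lt_or_ge m n with h | h
      · exact Set.mem_biUnion (Finset.mem_range.mpr h) hm
      · exact absurd (hKle n m h hm.1) hzH
    exact (Set.Finite.biUnion (Finset.range n).finite_toSet (fun m _ => hXifin m)).subset hsub
end

section
/- Let 𝓤 be a free ultrafilter on ω, and let φ : ω → ω be a monotone function such that φ(n) > n for all n ∈ ω. Then there exist monotone sequences (a_n)_{n∈ω} and (b_n)_{n∈ω} in ω such that a_n < b_n < φ(b_n) < a_{n+1} for all n ∈ ω and ⋃_{n∈ω} [a_n, b_n] ∈ 𝓤. -/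
private def seqc (φ : ℕ → ℕ) : ℕ → ℕ
  | 0 => 0
  | n + 1 => φ (seqc φ n) + 1

private lemma seqc_lt (φ : ℕ → ℕ) (hgt : ∀ n, n < φ n) (n : ℕ) :
    seqc φ n < seqc φ (n + 1) := by
  have := hgt (seqc φ n)
  simp [seqc]; omega

private lemma seqc_mono (φ : ℕ → ℕ) (hgt : ∀ n, n < φ n) : StrictMono (seqc φ) :=
  strictMono_nat_of_lt_succ (seqc_lt φ hgt)

private lemma seqc_cover (φ : ℕ → ℕ) (hgt : ∀ n, n < φ n) (m : ℕ) :
    ∃ n, seqc φ n ≤ m ∧ m < seqc φ (n + 1) := by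
  induction m with
  | zero =>
    refine ⟨0, le_refl _, ?_⟩
    simp [seqc]
  | succ m ih =>
    obtain ⟨n, h1, h2⟩ := ih
    rcases lt_or_ge (m + 1) (seqc φ (n + 1)) with h | h
    · exact ⟨n, by omega, h⟩
    · refine ⟨n + 1, by omega, ?_⟩
      have : m + 1 = seqc φ (n + 1) := by omega
      rw [this]
      exact Nat.lt_succ_of_le (hgt (seqc φ (n + 1))).le

private lemma key (𝓤 : Ultrafilter ℕ) (φ : ℕ → ℕ) (hmono : Monotone φ)
    (hgt : ∀ n : ℕ, n < φ n) (t : ℕ)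
    (hU : (⋃ n, Set.Icc (seqc φ (2 * n + t)) (φ (seqc φ (2 * n + t)))) ∈ 𝓤) :
    ∃ a b : ℕ → ℕ, Monotone a ∧ Monotone b ∧
      (∀ n : ℕ, a n < b n ∧ b n < φ (b n) ∧ φ (b n) < a (n + 1)) ∧
      (⋃ n, Set.Icc (a n) (b n)) ∈ 𝓤 := by
  refine ⟨fun n => seqc φ (2 * n + t), fun n => φ (seqc φ (2 * n + t)), ?_, ?_, ?_, hU⟩
  · exact fun i j hij => ((seqc_mono φ hgt).monotone (by omega))
  · exact fun i j hij => hmono ((seqc_mono φ hgt).monotone (by omega))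
  · intro n
    refine ⟨hgt _, hgt _, ?_⟩
    have h1 : φ (seqc φ (2 * n + t)) < seqc φ (2 * n + t + 1) := by
      simp [seqc]
    have h2 : φ (φ (seqc φ (2 * n + t))) ≤ φ (seqc φ (2 * n + t + 1)) :=
      hmono (by omega)
    have h3 : seqc φ (2 * n + t + 2) = φ (seqc φ (2 * n + t + 1)) + 1 := rfl
    have h4 : 2 * (n + 1) + t = 2 * n + t + 2 := by omega
    show φ (φ (seqc φ (2 * n + t))) < seqc φ (2 * (n + 1) + t)
    rw [h4, h3]
    omega

theorem stmt_15 (𝓤 : Ultrafilter ℕ) (hfree : IsFreeFilter (𝓤 : Filter ℕ))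
    (φ : ℕ → ℕ) (hmono : Monotone φ) (hgt : ∀ n : ℕ, n < φ n) :
    ∃ a b : ℕ → ℕ, Monotone a ∧ Monotone b ∧
      (∀ n : ℕ, a n < b n ∧ b n < φ (b n) ∧ φ (b n) < a (n + 1)) ∧
      (⋃ n, Set.Icc (a n) (b n)) ∈ 𝓤 := by
  set E := ⋃ n, Set.Icc (seqc φ (2 * n + 0)) (φ (seqc φ (2 * n + 0))) with hE
  set O := ⋃ n, Set.Icc (seqc φ (2 * n + 1)) (φ (seqc φ (2 * n + 1))) with hO
  have hcover : E ∪ O = Set.univ := by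
    ext m
    simp only [Set.mem_union, Set.mem_univ, iff_true, hE, hO, Set.mem_iUnion, Set.mem_Icc]
    obtain ⟨n, h1, h2⟩ := seqc_cover φ hgt m
    have h3 : seqc φ (n + 1) = φ (seqc φ n) + 1 := rfl
    rcases Nat.even_or_odd n with ⟨k, hk⟩ | ⟨k, hk⟩
    · left; refine ⟨k, ?_⟩
      have hn : 2 * k + 0 = n := by omega
      rw [hn]; omega
    · right; refine ⟨k, ?_⟩
      have hn : 2 * k + 1 = n := by omega
      rw [hn]; omega
  have hmem : E ∪ O ∈ 𝓤 := by rw [hcover]; exact Filter.univ_mem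
  rcases Ultrafilter.union_mem_iff.mp hmem with h | h
  · exact key 𝓤 φ hmono hgt 0 h
  · exact key 𝓤 φ hmono hgt 1 h
end

section
/- Let 𝓤 be a free ultrafilter on the set [ω]^{<ω} of finite subsets of ω, and let ξ = {X_n : n ∈ ω} ∈ 𝓤 be a set of nonempty finite subsets of ω with lim_{n→∞} min X_n = ∞. Then there exists a sequence (𝒴_n)_{n∈ω} of finite subsets of ξ such that ⋃_{n∈ω} 𝒴_n ∈ 𝓤 and (⋃𝒴_i) ∩ (⋃𝒴_j) = ∅ for any distinct i, j ∈ ω (where ⋃𝒴_i denotes the union, as a subset of ω, of the finite sets belonging to 𝒴_i). -/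
noncomputable def Kfun (ξ : Set (Finset ℕ))
    (hlim : ∀ k : ℕ, {X ∈ ξ | ∃ m ∈ X, m ≤ k}.Finite) : ℕ → ℕ
  | 0 => 0
  | n + 1 => Kfun ξ hlim n + 1 +
      ((hlim (Kfun ξ hlim n)).toFinset).sup (fun X => X.sup id)

noncomputable def Sfun (ξ : Set (Finset ℕ))
    (hlim : ∀ k : ℕ, {X ∈ ξ | ∃ m ∈ X, m ≤ k}.Finite) (n : ℕ) :
    Finset (Finset ℕ) := (hlim (Kfun ξ hlim n)).toFinset

noncomputable def Bfun (ξ : Set (Finset ℕ))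
    (hlim : ∀ k : ℕ, {X ∈ ξ | ∃ m ∈ X, m ≤ k}.Finite) (n : ℕ) :
    Finset (Finset ℕ) :=
  Sfun ξ hlim (n + 1) \ (if n = 0 then ∅ else Sfun ξ hlim n)

section aux

variable (ξ : Set (Finset ℕ)) (hlim : ∀ k : ℕ, {X ∈ ξ | ∃ m ∈ X, m ≤ k}.Finite)

lemma K_lt (n : ℕ) : Kfun ξ hlim n < Kfun ξ hlim (n + 1) := by
  show Kfun ξ hlim n < Kfun ξ hlim n + 1 + _
  omega

lemma K_mono : Monotone (Kfun ξ hlim) :=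
  monotone_nat_of_le_succ (fun n => (K_lt ξ hlim n).le)

lemma K_ge (n : ℕ) : n ≤ Kfun ξ hlim n := by
  induction n with
  | zero => simp
  | succ n ih => have := K_lt ξ hlim n; omega

lemma mem_S {X : Finset ℕ} {n : ℕ} :
    X ∈ Sfun ξ hlim n ↔ X ∈ ξ ∧ ∃ m ∈ X, m ≤ Kfun ξ hlim n := by
  simp [Sfun, Set.Finite.mem_toFinset, Set.mem_setOf_eq]

lemma S_mono {n m : ℕ} (h : n ≤ m) : Sfun ξ hlim n ⊆ Sfun ξ hlim m := by
  intro X hX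
  rw [mem_S] at hX ⊢
  obtain ⟨h1, a, ha, ha'⟩ := hX
  exact ⟨h1, a, ha, ha'.trans (K_mono ξ hlim h)⟩

lemma elem_le {X : Finset ℕ} {n : ℕ} (hX : X ∈ Sfun ξ hlim n) {x : ℕ}
    (hx : x ∈ X) : x ≤ Kfun ξ hlim (n + 1) := by
  have h1 : x ≤ X.sup id := Finset.le_sup (f := id) hx
  have h2 : X.sup id ≤ ((hlim (Kfun ξ hlim n)).toFinset).sup (fun X => X.sup id) :=
    Finset.le_sup (f := fun X => X.sup id) hX
  show x ≤ Kfun ξ hlim n + 1 + _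
  omega

lemma B_subset_S (n : ℕ) : Bfun ξ hlim n ⊆ Sfun ξ hlim (n + 1) :=
  Finset.sdiff_subset

lemma B_subset (n : ℕ) : (Bfun ξ hlim n : Set (Finset ℕ)) ⊆ ξ := by
  intro X hX
  have := B_subset_S ξ hlim n hX
  exact ((mem_S ξ hlim).mp this).1

lemma cover {X : Finset ℕ} (hX : X ∈ ξ) (hXne : X.Nonempty) :
    ∃ n, X ∈ Bfun ξ hlim n := by
  have hex : ∃ n, X ∈ Sfun ξ hlim n := by
    refine ⟨X.min' hXne, (mem_S ξ hlim).mpr ⟨hX, X.min' hXne, X.min'_mem hXne, ?_⟩⟩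
    exact K_ge ξ hlim _
  classical
  set n := Nat.find hex with hn
  have hXn : X ∈ Sfun ξ hlim n := Nat.find_spec hex
  match hn' : n with
  | 0 =>
    refine ⟨0, ?_⟩
    simp only [Bfun, if_pos, Finset.sdiff_empty]
    exact S_mono ξ hlim (by omega) hXn
  | 1 =>
    refine ⟨0, ?_⟩
    simp only [Bfun, if_pos, Finset.sdiff_empty]
    exact hXn
  | k + 2 =>
    refine ⟨k + 1, ?_⟩
    have hnot : X ∉ Sfun ξ hlim (k + 1) := by
      have := Nat.find_min hex (m := k + 1) (by omega)
      exact this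
    simp only [Bfun, if_neg (Nat.succ_ne_zero k), Finset.mem_sdiff]
    exact ⟨hXn, hnot⟩

lemma B_disj {a b : ℕ} (hab : a + 2 ≤ b) :
    Disjoint ((Bfun ξ hlim a).biUnion id) ((Bfun ξ hlim b).biUnion id) := by
  rw [Finset.disjoint_left]
  intro x hx hx'
  rw [Finset.mem_biUnion] at hx hx'
  obtain ⟨X, hXa, hxX⟩ := hx
  obtain ⟨Y, hYb, hxY⟩ := hx'
  have h1 : x ≤ Kfun ξ hlim (a + 2) :=
    elem_le ξ hlim (B_subset_S ξ hlim a hXa) hxX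
  have hbne : b ≠ 0 := by omega
  have hYnot : Y ∉ Sfun ξ hlim b := by
    simp only [Bfun, if_neg hbne, Finset.mem_sdiff] at hYb
    exact hYb.2
  have hYξ : Y ∈ ξ := B_subset ξ hlim b hYb
  have h2 : Kfun ξ hlim b < x := by
    by_contra h
    exact hYnot ((mem_S ξ hlim).mpr ⟨hYξ, x, hxY, by omega⟩)
  have := K_mono ξ hlim hab
  omega

end aux

theorem stmt_16 (𝓤 : Ultrafilter (Finset ℕ))
    (hfree : IsFreeFilter (𝓤 : Filter (Finset ℕ)))
    (ξ : Set (Finset ℕ)) (hξ : ξ ∈ 𝓤) (hne : ∀ X ∈ ξ, X.Nonempty)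
    -- `min Xₙ → ∞`: for each `k` only finitely many members of `ξ` meet `[0, k]`
    (hlim : ∀ k : ℕ, {X ∈ ξ | ∃ m ∈ X, m ≤ k}.Finite) :
    ∃ 𝒴 : ℕ → Finset (Finset ℕ),
      (∀ n, (𝒴 n : Set (Finset ℕ)) ⊆ ξ) ∧
      (⋃ n, (𝒴 n : Set (Finset ℕ))) ∈ 𝓤 ∧
      ∀ i j : ℕ, i ≠ j → Disjoint ((𝒴 i).biUnion id) ((𝒴 j).biUnion id) := by
  classical
  set B := Bfun ξ hlim with hB
  set E : Set (Finset ℕ) := ⋃ n, (B (2 * n) : Set (Finset ℕ)) with hE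
  set O : Set (Finset ℕ) := ⋃ n, (B (2 * n + 1) : Set (Finset ℕ)) with hO
  have hcov : ξ ⊆ E ∪ O := by
    intro X hX
    obtain ⟨n, hn⟩ := cover ξ hlim hX (hne X hX)
    rcases Nat.even_or_odd n with ⟨k, hk⟩ | ⟨k, hk⟩
    · left; exact Set.mem_iUnion.mpr ⟨k, by rw [← two_mul] at hk; rw [← hk]; exact hn⟩
    · right; exact Set.mem_iUnion.mpr ⟨k, by rw [← hk]; exact hn⟩
  have hmem : E ∪ O ∈ 𝓤 := 𝓤.toFilter.mem_of_superset hξ hcov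
  have key : E ∈ 𝓤 ∨ O ∈ 𝓤 := Ultrafilter.union_mem_iff.mp hmem
  rcases key with h | h
  · refine ⟨fun n => B (2 * n), fun n => B_subset ξ hlim _, h, ?_⟩
    intro i j hij
    rcases lt_or_gt_of_ne hij with hlt | hlt
    · exact B_disj ξ hlim (by omega)
    · exact (B_disj ξ hlim (by omega)).symm
  · refine ⟨fun n => B (2 * n + 1), fun n => B_subset ξ hlim _, h, ?_⟩
    intro i j hij
    rcases lt_or_gt_of_ne hij with hlt | hlt
    · exact B_disj ξ hlim (by omega)
    · exact (B_disj ξ hlim (by omega)).symm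
end
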